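/- arXiv:2009.03206 — 10 statements merged into one kernel-verified Lean document; each statement's English description precedes it below -/
import Mathlib

section
/- Let T be a bounded linear operator on a complex Hilbert space H. Then ‖T‖² + max{c(|T|²), c(|T*|²)} ≤ ‖T*T + TT*‖, where c(A) = inf{|⟨Ax,x⟩| : ‖x‖=1} is the Crawford number. -/
/-- The Crawford number `c(A) = inf { |⟨Ax,x⟩| : ‖x‖ = 1 }`. -/
noncomputable def crawford {H : Type*} [NormedAddCommGroup H] [InnerProductSpace ℂ H]
    (A : H →L[ℂ] H) : ℝ :=
  sInf {r : ℝ | ∃ x : H, ‖x‖ = 1 ∧ r = ‖(inner ℂ (A x) x : ℂ)‖}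

open ContinuousLinearMap in
lemma inner_adj_mul {H : Type*} [NormedAddCommGroup H] [InnerProductSpace ℂ H] [CompleteSpace H]
    (S : H →L[ℂ] H) (x : H) :
    (inner ℂ ((adjoint S * S) x) x : ℂ) = ((‖S x‖ ^ 2 : ℝ) : ℂ) := by
  simp [ContinuousLinearMap.mul_apply, ContinuousLinearMap.adjoint_inner_left,
    inner_self_eq_norm_sq_to_K]

lemma crawford_le {H : Type*} [NormedAddCommGroup H] [InnerProductSpace ℂ H]
    (A : H →L[ℂ] H) {x : H} (hx : ‖x‖ = 1) :
    crawford A ≤ ‖(inner ℂ (A x) x : ℂ)‖ := by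
  apply csInf_le
  · exact ⟨0, fun r ⟨y, _, hy⟩ => hy ▸ norm_nonneg _⟩
  · exact ⟨x, hx, rfl⟩

lemma crawford_nonneg {H : Type*} [NormedAddCommGroup H] [InnerProductSpace ℂ H]
    (A : H →L[ℂ] H) : 0 ≤ crawford A :=
  Real.sInf_nonneg fun r ⟨_, _, hy⟩ => hy ▸ norm_nonneg _

lemma opnorm_sq_add_le {H : Type*} [NormedAddCommGroup H] [InnerProductSpace ℂ H]
    (S : H →L[ℂ] H) {M c : ℝ} (hMc : 0 ≤ M - c)
    (hb : ∀ x : H, ‖x‖ = 1 → ‖S x‖ ^ 2 + c ≤ M) : ‖S‖ ^ 2 + c ≤ M := by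
  have hT : ‖S‖ ≤ Real.sqrt (M - c) := by
    apply ContinuousLinearMap.opNorm_le_bound _ (Real.sqrt_nonneg _)
    intro y
    rcases eq_or_ne y 0 with rfl | hy
    · simp
    · have hny : ‖y‖ ≠ 0 := norm_ne_zero_iff.mpr hy
      have hu : ‖(‖y‖⁻¹ : ℂ) • y‖ = 1 := by
        simp [norm_smul, inv_mul_cancel₀ hny]
      have hT2 : ‖S ((‖y‖⁻¹ : ℂ) • y)‖ ^ 2 ≤ M - c := by
        have := hb _ hu; linarith
      have hT1 : ‖S ((‖y‖⁻¹ : ℂ) • y)‖ ≤ Real.sqrt (M - c) := by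
        rw [← Real.sqrt_sq (norm_nonneg _)]
        exact Real.sqrt_le_sqrt hT2
      have hsm : ‖S ((‖y‖⁻¹ : ℂ) • y)‖ = ‖y‖⁻¹ * ‖S y‖ := by
        rw [map_smul, norm_smul]; simp
      rw [hsm] at hT1
      calc ‖S y‖ = (‖y‖⁻¹ * ‖S y‖) * ‖y‖ := by field_simp
        _ ≤ Real.sqrt (M - c) * ‖y‖ := by gcongr
  have := pow_le_pow_left₀ (norm_nonneg S) hT 2
  rw [Real.sq_sqrt hMc] at this
  linarith

open ContinuousLinearMap in
theorem stmt0 {H : Type*} [NormedAddCommGroup H] [InnerProductSpace ℂ H] [CompleteSpace H]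
    (T : H →L[ℂ] H) :
    ‖T‖ ^ 2 + max (crawford (ContinuousLinearMap.adjoint T * T))
        (crawford (T * ContinuousLinearMap.adjoint T)) ≤
      ‖ContinuousLinearMap.adjoint T * T + T * ContinuousLinearMap.adjoint T‖ := by
  by_cases hex : ∃ x : H, ‖x‖ = 1
  · obtain ⟨x₀, hx₀⟩ := hex
    set A := adjoint T * T + T * adjoint T with hA
    have key : ∀ x : H, ‖x‖ = 1 → ‖T x‖ ^ 2 + ‖adjoint T x‖ ^ 2 ≤ ‖A‖ := by
      intro x hx
      have h1 : (inner ℂ (A x) x : ℂ) = ((‖T x‖ ^ 2 + ‖adjoint T x‖ ^ 2 : ℝ) : ℂ) := by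
        have e1 := inner_adj_mul T x
        have e2 := inner_adj_mul (adjoint T) x
        rw [adjoint_adjoint] at e2
        simp only [hA, ContinuousLinearMap.add_apply, inner_add_left, e1, e2]
        push_cast; ring
      have h2 : ‖(inner ℂ (A x) x : ℂ)‖ = ‖T x‖ ^ 2 + ‖adjoint T x‖ ^ 2 := by
        rw [h1, Complex.norm_real, Real.norm_of_nonneg (by positivity)]
      calc ‖T x‖ ^ 2 + ‖adjoint T x‖ ^ 2 = ‖(inner ℂ (A x) x : ℂ)‖ := h2.symm
        _ ≤ ‖A x‖ * ‖x‖ := norm_inner_le_norm _ _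
        _ ≤ ‖A‖ * ‖x‖ * ‖x‖ := by
            gcongr; exact ContinuousLinearMap.le_opNorm _ _
        _ = ‖A‖ := by rw [hx]; ring
    have c1 : ∀ x : H, ‖x‖ = 1 → crawford (adjoint T * T) ≤ ‖T x‖ ^ 2 := by
      intro x hx
      have := crawford_le (adjoint T * T) hx
      rwa [inner_adj_mul, Complex.norm_real, Real.norm_of_nonneg (by positivity)] at this
    have c2 : ∀ x : H, ‖x‖ = 1 → crawford (T * adjoint T) ≤ ‖adjoint T x‖ ^ 2 := by
      intro x hx
      have := crawford_le (T * adjoint T) hx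
      have e : (T * adjoint T) = adjoint (adjoint T) * adjoint T := by rw [adjoint_adjoint]
      rw [e, inner_adj_mul, Complex.norm_real, Real.norm_of_nonneg (by positivity)] at this
      rwa [e]
    have hc1 := crawford_nonneg (adjoint T * T)
    have hc2 := crawford_nonneg (T * adjoint T)
    have hTa : ‖adjoint T‖ = ‖T‖ := LinearIsometryEquiv.norm_map adjoint T
    have b2 : ‖T‖ ^ 2 + crawford (T * adjoint T) ≤ ‖A‖ := by
      apply opnorm_sq_add_le T
      · have := key x₀ hx₀; have := c2 x₀ hx₀; nlinarith [sq_nonneg ‖T x₀‖]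
      · intro x hx
        have := key x hx; have := c2 x hx; linarith
    have b1 : ‖T‖ ^ 2 + crawford (adjoint T * T) ≤ ‖A‖ := by
      rw [← hTa]
      apply opnorm_sq_add_le (adjoint T)
      · have := key x₀ hx₀; have := c1 x₀ hx₀; nlinarith [sq_nonneg ‖adjoint T x₀‖]
      · intro x hx
        have := key x hx; have := c1 x hx; linarith
    rcases max_cases (crawford (adjoint T * T)) (crawford (T * adjoint T)) with ⟨h, _⟩ | ⟨h, _⟩
    · rw [h]; exact b1
    · rw [h]; exact b2
  · have hT0 : ‖T‖ = 0 := by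
      have hz : T = 0 := by
        ext y
        by_cases hy : y = 0
        · simp [hy]
        · exact absurd ⟨(‖y‖⁻¹ : ℂ) • y, by
            simp [norm_smul, inv_mul_cancel₀ (norm_ne_zero_iff.mpr hy)]⟩ hex
      simp [hz]
    have hcraw : ∀ B : H →L[ℂ] H, crawford B = 0 := by
      intro B
      have : {r : ℝ | ∃ x : H, ‖x‖ = 1 ∧ r = ‖(inner ℂ (B x) x : ℂ)‖} = ∅ := by
        ext r; simp only [Set.mem_setOf_eq, Set.mem_empty_iff_false, iff_false]
        rintro ⟨x, hx, _⟩; exact hex ⟨x, hx⟩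
      rw [crawford, this, Real.sInf_empty]
    rw [hT0, hcraw, hcraw]
    simpa using norm_nonneg (adjoint T * T + T * adjoint T)
end

section
/- Let T be a bounded linear operator on a complex Hilbert space and let x be any vector. Then |⟨Tx,x⟩| ≤ ⟨|T|x,x⟩^{1/2} · ⟨|T*|x,x⟩^{1/2}, where |T| = (T*T)^{1/2} and |T*| = (TT*)^{1/2}. -/
open ContinuousLinearMap in
/-- The numerical radius `w(T) = sup { |⟨Tx,x⟩| : ‖x‖ = 1 }`. -/
noncomputable def numRad {H : Type*} [NormedAddCommGroup H] [InnerProductSpace ℂ H]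
    (T : H →L[ℂ] H) : ℝ :=
  sSup {r : ℝ | ∃ x : H, ‖x‖ = 1 ∧ r = ‖(inner ℂ (T x) x : ℂ)‖}

/-- `|T| = (T^*T)^{1/2}`; note `absOp (adjoint T) = (TT^*)^{1/2} = |T^*|`. -/
noncomputable def absOp {H : Type*} [NormedAddCommGroup H] [InnerProductSpace ℂ H]
    [CompleteSpace H] (T : H →L[ℂ] H) : H →L[ℂ] H :=
  CFC.sqrt (ContinuousLinearMap.adjoint T * T)

/-- Real powers of a (positive) operator via the continuous functional calculus. -/
noncomputable def opRPow {H : Type*} [NormedAddCommGroup H] [InnerProductSpace ℂ H]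
    [CompleteSpace H] (A : H →L[ℂ] H) (r : ℝ) : H →L[ℂ] H :=
  CFC.rpow A r

open Polynomial in
lemma aeval_intertwine {H : Type*} [NormedAddCommGroup H] [InnerProductSpace ℂ H]
    [CompleteSpace H] (a a' b : H →L[ℂ] H) (hab : b * a = a' * b) (q : ℝ[X]) :
    b * aeval a q = aeval a' q * b := by
  have hpow : ∀ n : ℕ, b * a ^ n = a' ^ n * b := by
    intro n
    induction n with
    | zero => simp
    | succ n ih =>
      rw [pow_succ, ← mul_assoc, ih, mul_assoc, hab, pow_succ, mul_assoc]
  rw [Polynomial.aeval_eq_sum_range, Polynomial.aeval_eq_sum_range, Finset.mul_sum,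
    Finset.sum_mul]
  refine Finset.sum_congr rfl fun i _ => ?_
  rw [mul_smul_comm, smul_mul_assoc, hpow]

open Polynomial in
lemma cfc_intertwine {H : Type*} [NormedAddCommGroup H] [InnerProductSpace ℂ H]
    [CompleteSpace H] {a a' b : H →L[ℂ] H} (ha : IsSelfAdjoint a) (ha' : IsSelfAdjoint a')
    (hab : b * a = a' * b) (f : ℝ → ℝ) (hf : Continuous f) :
    b * cfc f a = cfc f a' * b := by
  -- find a common interval containing both spectra
  obtain ⟨M, hM, hMa, hMa'⟩ : ∃ M : ℝ, 0 ≤ M ∧ spectrum ℝ a ⊆ Set.Icc (-M) M ∧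
      spectrum ℝ a' ⊆ Set.Icc (-M) M := by
    obtain ⟨r, hr⟩ := (spectrum.isCompact (𝕜 := ℝ) a).isBounded.subset_closedBall 0
    obtain ⟨r', hr'⟩ := (spectrum.isCompact (𝕜 := ℝ) a').isBounded.subset_closedBall 0
    refine ⟨max 0 (max r r'), le_max_left _ _, ?_, ?_⟩
    · refine hr.trans ?_
      rw [Real.closedBall_eq_Icc]
      exact Set.Icc_subset_Icc (by simp) (by simp)
    · refine hr'.trans ?_
      rw [Real.closedBall_eq_Icc]
      exact Set.Icc_subset_Icc (by simp) (by simp)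
  have key : ∀ ε : ℝ, 0 < ε → ‖b * cfc f a - cfc f a' * b‖ ≤ ε * (‖b‖ + ‖b‖) := by
    intro ε hε
    obtain ⟨p, hp⟩ := exists_polynomial_near_of_continuousOn (-M) M f hf.continuousOn ε hε
    have h1 : ‖cfc f a - aeval a p‖ ≤ ε := by
      rw [← cfc_polynomial p a, ← cfc_sub f (fun x => p.eval x) a hf.continuousOn
        p.continuous_aeval.continuousOn]
      exact norm_cfc_le hε.le fun x hx => by
        simpa [abs_sub_comm] using (hp x (hMa hx)).le
    have h1' : ‖aeval a' p - cfc f a'‖ ≤ ε := by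
      rw [← cfc_polynomial p a', ← cfc_sub (fun x => p.eval x) f a'
        p.continuous_aeval.continuousOn hf.continuousOn]
      exact norm_cfc_le hε.le fun x hx => by
        simpa using (hp x (hMa' hx)).le
    have hrw : b * cfc f a - cfc f a' * b
        = b * (cfc f a - aeval a p) + (aeval a' p - cfc f a') * b := by
      rw [mul_sub, sub_mul, aeval_intertwine a a' b hab p]; abel
    calc ‖b * cfc f a - cfc f a' * b‖
        ≤ ‖b * (cfc f a - aeval a p)‖ + ‖(aeval a' p - cfc f a') * b‖ := by
          rw [hrw]; exact norm_add_le _ _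
      _ ≤ ‖b‖ * ε + ε * ‖b‖ := by
          gcongr
          · exact (norm_mul_le _ _).trans (by gcongr)
          · exact (norm_mul_le _ _).trans (by gcongr)
      _ = ε * (‖b‖ + ‖b‖) := by ring
  have : ‖b * cfc f a - cfc f a' * b‖ ≤ 0 := by
    refine le_of_forall_pos_le_add fun δ hδ => ?_
    rcases eq_or_lt_of_le (norm_nonneg b) with hb | hb
    · have := key 1 one_pos
      rw [← hb] at this; simpa using this.trans (by linarith)
    · have := key (δ / (‖b‖ + ‖b‖)) (by positivity)
      rw [div_mul_cancel₀ _ (by positivity)] at this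
      linarith
  rw [← sub_eq_zero]
  exact norm_le_zero_iff.mp this

set_option synthInstance.maxHeartbeats 1000000 in
lemma cfcSqrt_eq {H : Type*} [NormedAddCommGroup H] [InnerProductSpace ℂ H]
    [CompleteSpace H] (a : H →L[ℂ] H) (ha : 0 ≤ a) : CFC.sqrt a = cfc Real.sqrt a := by
  refine CFC.sqrt_unique ?_ (cfc_nonneg fun x _ => Real.sqrt_nonneg x)
  rw [← cfc_mul _ _ a Real.continuous_sqrt.continuousOn Real.continuous_sqrt.continuousOn]
  calc cfc (fun x => Real.sqrt x * Real.sqrt x) a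
      = cfc (id : ℝ → ℝ) a := cfc_congr fun x hx =>
        Real.mul_self_sqrt (spectrum_nonneg_of_nonneg ha hx)
    _ = a := cfc_id ℝ a

set_option maxHeartbeats 1000000 in
set_option synthInstance.maxHeartbeats 1000000 in

set_option maxHeartbeats 1000000 in
set_option synthInstance.maxHeartbeats 1000000 in
open scoped InnerProductSpace in
theorem stmt1 {H : Type*} [NormedAddCommGroup H] [InnerProductSpace ℂ H] [CompleteSpace H]
    (T : H →L[ℂ] H) (x : H) :
    ‖(inner ℂ (T x) x : ℂ)‖ ≤
      Real.sqrt ((inner ℂ (absOp T x) x : ℂ).re) *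
        Real.sqrt ((inner ℂ (absOp (ContinuousLinearMap.adjoint T) x) x : ℂ).re) := by
  have hre : ∀ z : ℂ, z.re = RCLike.re z := fun z => rfl
  set A := ContinuousLinearMap.adjoint T * T with hA
  set B := T * ContinuousLinearMap.adjoint T with hB
  have hAsa : IsSelfAdjoint A := by
    rw [hA, ← ContinuousLinearMap.star_eq_adjoint]; exact IsSelfAdjoint.star_mul_self T
  have hBsa : IsSelfAdjoint B := by
    rw [hB, ← ContinuousLinearMap.star_eq_adjoint]; exact IsSelfAdjoint.mul_star_self T
  have hAnn : 0 ≤ A := by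
    rw [hA, ← ContinuousLinearMap.star_eq_adjoint]; exact star_mul_self_nonneg T
  have hBnn : 0 ≤ B := by
    rw [hB, ← ContinuousLinearMap.star_eq_adjoint]; exact mul_star_self_nonneg T
  have hTA : T * A = B * T := by rw [hA, hB, mul_assoc]
  have habs1 : absOp T = cfc Real.sqrt A := cfcSqrt_eq A hAnn
  have habs2 : absOp (ContinuousLinearMap.adjoint T) = cfc Real.sqrt B := by
    rw [absOp, ContinuousLinearMap.adjoint_adjoint]; exact cfcSqrt_eq B hBnn
  rw [habs1, habs2]
  set r1 := (inner ℂ (cfc Real.sqrt A x) x : ℂ).re with hr1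
  set r2 := (inner ℂ (cfc Real.sqrt B x) x : ℂ).re with hr2
  have hr1nn : 0 ≤ r1 := by
    have h0 : (0 : H →L[ℂ] H) ≤ cfc Real.sqrt A := cfc_nonneg fun t _ => Real.sqrt_nonneg t
    have h1 := ((ContinuousLinearMap.le_def _ _).mp h0).inner_nonneg_left x
    rw [sub_zero] at h1
    exact (Complex.nonneg_iff.mp h1).1
  have hr2nn : 0 ≤ r2 := by
    have h0 : (0 : H →L[ℂ] H) ≤ cfc Real.sqrt B := cfc_nonneg fun t _ => Real.sqrt_nonneg t
    have h1 := ((ContinuousLinearMap.le_def _ _).mp h0).inner_nonneg_left x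
    rw [sub_zero] at h1
    exact (Complex.nonneg_iff.mp h1).1
  set L := ‖(inner ℂ (T x) x : ℂ)‖ with hL
  have key : ∀ ε : ℝ, 0 < ε → L ^ 2 ≤ r1 * (r2 + ε * ‖x‖ ^ 2) := by
    intro ε hε
    set h : ℝ → ℝ := fun t => Real.sqrt (Real.sqrt t + ε) with hh
    have hpos : ∀ t, 0 < h t := fun t => Real.sqrt_pos.mpr (by positivity)
    have hcont : Continuous h :=
      Real.continuous_sqrt.comp (Real.continuous_sqrt.add continuous_const)
    set g : ℝ → ℝ := fun t => (h t)⁻¹ with hg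
    have hgcont : Continuous g := hcont.inv₀ fun t => (hpos t).ne'
    set P := cfc h B with hP
    set S := cfc g B with hS
    have hPsa : IsSelfAdjoint P := cfc_predicate h B
    have hSsa : IsSelfAdjoint S := cfc_predicate g B
    have hsymP : ∀ u v : H, (inner ℂ (P u) v : ℂ) = inner ℂ u (P v) := fun u v =>
      hPsa.isSymmetric u v
    have hsymS : ∀ u v : H, (inner ℂ (S u) v : ℂ) = inner ℂ u (S v) := fun u v =>
      hSsa.isSymmetric u v
    have hPS : P * S = 1 := by
      rw [hP, hS, ← cfc_mul _ _ B hcont.continuousOn hgcont.continuousOn]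
      calc cfc (fun t => h t * g t) B = cfc (1 : ℝ → ℝ) B :=
            cfc_congr fun t _ => mul_inv_cancel₀ (hpos t).ne'
        _ = 1 := cfc_one ℝ B
    have step1 : L ≤ ‖S (T x)‖ * ‖P x‖ := by
      have hTx : T x = P (S (T x)) := by
        rw [← ContinuousLinearMap.mul_apply, hPS, ContinuousLinearMap.one_apply]
      calc L = ‖(inner ℂ (P (S (T x))) x : ℂ)‖ := by rw [hL, ← hTx]
        _ = ‖(inner ℂ (S (T x)) (P x) : ℂ)‖ := by rw [hsymP (S (T x)) x]
        _ ≤ ‖S (T x)‖ * ‖P x‖ := norm_inner_le_norm _ _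
    have step2 : ‖P x‖ ^ 2 = r2 + ε * ‖x‖ ^ 2 := by
      have hPP : P * P = cfc Real.sqrt B + algebraMap ℂ (H →L[ℂ] H) (ε : ℂ) := by
        rw [show ((ε : ℂ)) = algebraMap ℝ ℂ ε from rfl,
          ← IsScalarTower.algebraMap_apply ℝ ℂ (H →L[ℂ] H)]
        rw [hP, ← cfc_mul _ _ B hcont.continuousOn hcont.continuousOn]
        calc cfc (fun t => h t * h t) B
            = cfc (fun t => Real.sqrt t + ε) B := cfc_congr fun t _ => by
              rw [hh]; exact Real.mul_self_sqrt (by positivity)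
          _ = cfc Real.sqrt B + algebraMap ℝ (H →L[ℂ] H) ε := by
              rw [cfc_add B _ _ Real.continuous_sqrt.continuousOn continuousOn_const,
                cfc_const ε B]
        
      have e1 : (inner ℂ (P x) (P x) : ℂ) = inner ℂ x ((P * P) x) := by
        rw [hsymP x (P x), ContinuousLinearMap.mul_apply]
      have e2 : (inner ℂ x ((P * P) x) : ℂ)
          = inner ℂ x (cfc Real.sqrt B x) + (ε : ℂ) * inner ℂ x x := by
        rw [hPP, ContinuousLinearMap.add_apply, inner_add_right,
          Algebra.algebraMap_eq_smul_one, ContinuousLinearMap.smul_apply,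
          ContinuousLinearMap.one_apply, inner_smul_right]
      have hre2 : (inner ℂ (P x) (P x) : ℂ).re = r2 + ε * ‖x‖ ^ 2 := by
        rw [e1, e2, Complex.add_re, Complex.re_ofReal_mul]
        congr 1
        · exact inner_re_symm (𝕜 := ℂ) x (cfc Real.sqrt B x)
        · congr 1
          exact inner_self_eq_norm_sq (𝕜 := ℂ) x
      rw [← inner_self_eq_norm_sq (𝕜 := ℂ) (P x)]
      exact hre2
    have step3 : ‖S (T x)‖ ^ 2 ≤ r1 := by
      set q : ℝ → ℝ := fun t => (Real.sqrt t + ε)⁻¹ with hq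
      have hqcont : Continuous q :=
        (Real.continuous_sqrt.add continuous_const).inv₀ fun t => (add_pos_of_nonneg_of_pos (Real.sqrt_nonneg t) hε).ne'
      have hSS : S * S = cfc q B := by
        rw [hS, ← cfc_mul _ _ B hgcont.continuousOn hgcont.continuousOn]
        refine cfc_congr fun t _ => ?_
        rw [hg, hh]
        show (Real.sqrt (Real.sqrt t + ε))⁻¹ * (Real.sqrt (Real.sqrt t + ε))⁻¹ = _
        rw [← mul_inv, Real.mul_self_sqrt (by positivity)]
      have hint : cfc q B * T = T * cfc q A := (cfc_intertwine hAsa hBsa hTA q hqcont).symm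
      set m : ℝ → ℝ := fun t => t * q t with hm
      have hAq : A * cfc q A = cfc m A := by
        nth_rewrite 1 [← cfc_id ℝ A]
        rw [← cfc_mul (id : ℝ → ℝ) q A continuousOn_id hqcont.continuousOn]
        exact cfc_congr fun t _ => rfl
      have e3 : (inner ℂ (S (T x)) (S (T x)) : ℂ) = inner ℂ x (cfc m A x) := by
        rw [hsymS (T x) (S (T x)), ← ContinuousLinearMap.mul_apply, hSS,
          ← ContinuousLinearMap.mul_apply (cfc q B) T, hint,
          ContinuousLinearMap.mul_apply, ← ContinuousLinearMap.adjoint_inner_left,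
          ← ContinuousLinearMap.mul_apply (ContinuousLinearMap.adjoint T) T, ← hA]
        rw [show (inner ℂ (A x) (cfc q A x) : ℂ) = inner ℂ x (A (cfc q A x)) from
          hAsa.isSymmetric x (cfc q A x)]
        rw [← ContinuousLinearMap.mul_apply, hAq]
      have hmcont : Continuous m := continuous_id.mul hqcont
      have hmono : cfc m A ≤ cfc Real.sqrt A := by
        refine cfc_mono (fun t ht => ?_) hmcont.continuousOn
          Real.continuous_sqrt.continuousOn
        have ht0 : 0 ≤ t := spectrum_nonneg_of_nonneg hAnn ht
        have h1 : 0 < Real.sqrt t + ε := by positivity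
        show t * (Real.sqrt t + ε)⁻¹ ≤ Real.sqrt t
        rw [mul_inv_le_iff₀ h1]
        nlinarith [Real.sq_sqrt ht0, Real.sqrt_nonneg t]
      have hposd := ((ContinuousLinearMap.le_def _ _).mp hmono).inner_nonneg_left x
      rw [← inner_self_eq_norm_sq (𝕜 := ℂ) (S (T x)), e3,
        inner_re_symm (𝕜 := ℂ) x (cfc m A x)]
      rw [ContinuousLinearMap.sub_apply, inner_sub_left] at hposd
      have hposd' := (Complex.nonneg_iff.mp hposd).1
      rw [Complex.sub_re] at hposd'
      show (inner ℂ (cfc m A x) x : ℂ).re ≤ r1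
      linarith
    calc L ^ 2 ≤ (‖S (T x)‖ * ‖P x‖) ^ 2 := by
          have : 0 ≤ L := norm_nonneg _
          nlinarith [norm_nonneg (S (T x)), norm_nonneg (P x)]
      _ = ‖S (T x)‖ ^ 2 * ‖P x‖ ^ 2 := by ring
      _ ≤ r1 * (r2 + ε * ‖x‖ ^ 2) := by
          rw [step2]
          have h2 : 0 ≤ r2 + ε * ‖x‖ ^ 2 := by positivity
          nlinarith [sq_nonneg ‖S (T x)‖]
  have key' : L ^ 2 ≤ r1 * r2 := by
    refine le_of_forall_pos_le_add fun δ hδ => ?_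
    have hc : (0:ℝ) < r1 * ‖x‖ ^ 2 + 1 := by positivity
    have := key (δ / (r1 * ‖x‖ ^ 2 + 1)) (by positivity)
    have hle : r1 * (δ / (r1 * ‖x‖ ^ 2 + 1) * ‖x‖ ^ 2) ≤ δ := by
      rw [div_mul_eq_mul_div, mul_div_assoc', div_le_iff₀ hc]
      nlinarith
    nlinarith
  calc L = Real.sqrt (L ^ 2) := (Real.sqrt_sq (norm_nonneg _)).symm
    _ ≤ Real.sqrt (r1 * r2) := Real.sqrt_le_sqrt key'
    _ = Real.sqrt r1 * Real.sqrt r2 := Real.sqrt_mul hr1nn r2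
end

section
/- Let T be a bounded linear operator on a complex Hilbert space. Then for every real r ≥ 1 and every α with 0 ≤ α ≤ 1, w(T)^{2r} ≤ ‖α|T|^{2r} + (1-α)|T*|^{2r}‖, where w(T) is the numerical radius. -/
open Real in
private lemma tangent_line {r : ℝ} (hr : 1 ≤ r) {μ t : ℝ} (hμ : 0 ≤ μ) (ht : 0 ≤ t) :
    μ ^ r + r * μ ^ (r - 1) * (t - μ) ≤ t ^ r := by
  rcases eq_or_lt_of_le hμ with h0 | hμpos
  · rw [← h0]
    rcases eq_or_lt_of_le hr with h1 | h1
    · rw [← h1]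
      simp [Real.rpow_one]
    · rw [Real.zero_rpow (by linarith : r ≠ 0), Real.zero_rpow (by linarith : r - 1 ≠ 0)]
      simpa using Real.rpow_nonneg ht r
  · have hs : -1 ≤ t / μ - 1 := by
      have : 0 ≤ t / μ := div_nonneg ht hμpos.le
      linarith
    have key := one_add_mul_self_le_rpow_one_add hs hr
    have h1 : 1 + (t / μ - 1) = t / μ := by ring
    rw [h1] at key
    have hdiv : (t / μ) ^ r = t ^ r / μ ^ r := Real.div_rpow ht hμ r
    have hμr : 0 < μ ^ r := Real.rpow_pos_of_pos hμpos r
    have key2 : μ ^ r * (1 + r * (t / μ - 1)) ≤ t ^ r := by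
      rw [hdiv] at key
      calc μ ^ r * (1 + r * (t / μ - 1)) ≤ μ ^ r * (t ^ r / μ ^ r) :=
            mul_le_mul_of_nonneg_left key hμr.le
        _ = t ^ r := by field_simp
    refine le_trans (le_of_eq ?_) key2
    have hμ1 : μ ^ (r - 1) = μ ^ r / μ := by
      rw [Real.rpow_sub hμpos, Real.rpow_one]
    rw [hμ1]
    field_simp

section aux

variable {H : Type*} [NormedAddCommGroup H] [InnerProductSpace ℂ H] [CompleteSpace H]

private lemma rpow_eq_real_cfc (A : H →L[ℂ] H) (hA : 0 ≤ A) (r : ℝ) :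
    CFC.rpow A r = cfc (fun t : ℝ => t ^ r) A := by
  rw [show CFC.rpow A r = cfc (fun x : NNReal => x ^ r) A from rfl,
    cfc_nnreal_eq_real (fun x : NNReal => x ^ r) A hA]
  apply cfc_congr
  intro t ht
  have ht0 : 0 ≤ t := spectrum_nonneg_of_nonneg hA ht
  simp [NNReal.coe_rpow, Real.coe_toNNReal t ht0]

private lemma mccarthy (A : H →L[ℂ] H) (hA : 0 ≤ A) {r : ℝ} (hr : 1 ≤ r) {x : H}
    (hx : ‖x‖ = 1) :
    (RCLike.re (inner ℂ (A x) x : ℂ)) ^ r ≤ RCLike.re (inner ℂ ((CFC.rpow A r) x) x : ℂ) := by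
  have hApos : A.IsPositive := (ContinuousLinearMap.nonneg_iff_isPositive A).mp hA
  set μ : ℝ := RCLike.re (inner ℂ (A x) x : ℂ) with hμdef
  have hμ : 0 ≤ μ := hApos.re_inner_nonneg_left x
  have hsa : IsSelfAdjoint A := hApos.isSelfAdjoint
  have hcont : ContinuousOn (fun t : ℝ => t ^ r) (spectrum ℝ A) := fun t _ =>
    (Real.continuousAt_rpow_const t r (Or.inr (by linarith))).continuousWithinAt
  have key : (μ ^ r - r * μ ^ (r - 1) * μ) • (1 : H →L[ℂ] H) + (r * μ ^ (r - 1)) • A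
      ≤ CFC.rpow A r := by
    rw [rpow_eq_real_cfc A hA r]
    have h1 : cfc (fun t : ℝ => (μ ^ r - r * μ ^ (r - 1) * μ) + (r * μ ^ (r - 1)) * t) A
        = (μ ^ r - r * μ ^ (r - 1) * μ) • (1 : H →L[ℂ] H) + (r * μ ^ (r - 1)) • A := by
      rw [cfc_add (R := ℝ) A _ (fun t => r * μ ^ (r - 1) * t) continuousOn_const
          ((continuous_const.mul continuous_id').continuousOn),
        cfc_const _ A hsa, cfc_const_mul (R := ℝ) _ _ A (continuous_id'.continuousOn),
        cfc_id' ℝ A hsa, Algebra.algebraMap_eq_smul_one]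
    rw [← h1]
    apply cfc_mono
    · intro t ht
      have ht0 : 0 ≤ t := spectrum_nonneg_of_nonneg hA ht
      have := tangent_line hr hμ ht0
      linarith
    · exact (continuous_const.add (continuous_const.mul continuous_id')).continuousOn
    · exact hcont
  have hpos : (CFC.rpow A r - ((μ ^ r - r * μ ^ (r - 1) * μ) • (1 : H →L[ℂ] H)
      + (r * μ ^ (r - 1)) • A)).IsPositive := by
    rw [← ContinuousLinearMap.nonneg_iff_isPositive]
    exact sub_nonneg.mpr key
  have h2 := hpos.re_inner_nonneg_left x
  simp only [ContinuousLinearMap.sub_apply, ContinuousLinearMap.add_apply,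
    ContinuousLinearMap.smul_apply, ContinuousLinearMap.one_apply,
    inner_sub_left, inner_add_left, map_sub, map_add] at h2
  rw [RCLike.real_smul_eq_coe_smul (K := ℂ), RCLike.real_smul_eq_coe_smul (K := ℂ),
    inner_smul_left, inner_smul_left, RCLike.conj_ofReal, RCLike.conj_ofReal,
    RCLike.re_ofReal_mul, RCLike.re_ofReal_mul] at h2
  have hxx : RCLike.re (inner ℂ x x : ℂ) = 1 := by
    rw [inner_self_eq_norm_sq_to_K (𝕜 := ℂ) x]
    simp [hx]
  rw [hxx, ← hμdef] at h2
  nlinarith [h2]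

end aux



set_option maxHeartbeats 1000000 in
theorem stmt3 {H : Type*} [NormedAddCommGroup H] [InnerProductSpace ℂ H] [CompleteSpace H]
    (T : H →L[ℂ] H) (r : ℝ) (hr : 1 ≤ r) (α : ℝ) (hα0 : 0 ≤ α) (hα1 : α ≤ 1) :
    numRad T ^ (2 * r) ≤
      ‖α • opRPow (absOp T) (2 * r) +
        (1 - α) • opRPow (absOp (ContinuousLinearMap.adjoint T)) (2 * r)‖ := by
  have h2r : (0:ℝ) < 2 * r := by linarith
  set A := ContinuousLinearMap.adjoint T * T with hAdef
  set B := T * ContinuousLinearMap.adjoint T with hBdef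
  have hA : 0 ≤ A := by
    simpa [ContinuousLinearMap.star_eq_adjoint] using star_mul_self_nonneg T
  have hB : 0 ≤ B := by
    simpa [ContinuousLinearMap.star_eq_adjoint] using mul_star_self_nonneg T
  have hpow : ∀ (C : H →L[ℂ] H), 0 ≤ C → CFC.rpow (CFC.sqrt C) (2 * r) = CFC.rpow C r := by
    intro C hC
    calc CFC.rpow (CFC.sqrt C) (2 * r) = (C ^ (1/2 : ℝ)) ^ (2*r) := by
          rw [CFC.sqrt_eq_rpow]; rfl
      _ = C ^ ((1/2 : ℝ) * (2*r)) :=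
          CFC.rpow_rpow_of_exponent_nonneg C (1/2) (2*r) (by norm_num) (by linarith) hC
      _ = CFC.rpow C r := by rw [show (1/2 : ℝ) * (2*r) = r by ring]; rfl
  have hP : opRPow (absOp T) (2 * r) = CFC.rpow A r := hpow A hA
  have hQ : opRPow (absOp (ContinuousLinearMap.adjoint T)) (2 * r) = CFC.rpow B r := by
    rw [show absOp (ContinuousLinearMap.adjoint T) = CFC.sqrt B by
      rw [absOp, ContinuousLinearMap.adjoint_adjoint]]
    exact hpow B hB
  rw [hP, hQ]
  set P := CFC.rpow A r with hPdef
  set Q := CFC.rpow B r with hQdef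
  set S := α • P + (1 - α) • Q with hSdef
  have hkey : ∀ x : H, ‖x‖ = 1 → ‖(inner ℂ (T x) x : ℂ)‖ ^ (2*r) ≤ ‖S‖ := by
    intro x hx
    set c := ‖(inner ℂ (T x) x : ℂ)‖ with hcdef
    have hc : 0 ≤ c := norm_nonneg _
    set a := RCLike.re (inner ℂ (A x) x : ℂ) with hadef
    set b := RCLike.re (inner ℂ (B x) x : ℂ) with hbdef
    have ha_eq : a = ‖T x‖^2 := by
      rw [hadef, hAdef, ContinuousLinearMap.mul_apply,
        ContinuousLinearMap.adjoint_inner_left, inner_self_eq_norm_sq]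
    have hb_eq : b = ‖ContinuousLinearMap.adjoint T x‖^2 := by
      rw [hbdef, hBdef, ContinuousLinearMap.mul_apply,
        ← ContinuousLinearMap.adjoint_inner_right, inner_self_eq_norm_sq]
    have ha0 : 0 ≤ a := by rw [ha_eq]; positivity
    have hb0 : 0 ≤ b := by rw [hb_eq]; positivity
    have hca : c ≤ ‖T x‖ := by
      calc c ≤ ‖T x‖ * ‖x‖ := norm_inner_le_norm _ _
        _ = ‖T x‖ := by rw [hx, mul_one]
    have hcb : c ≤ ‖ContinuousLinearMap.adjoint T x‖ := by
      have : (inner ℂ (ContinuousLinearMap.adjoint T x) x : ℂ) = inner ℂ x (T x) :=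
        ContinuousLinearMap.adjoint_inner_left T x x
      calc c = ‖(inner ℂ x (T x) : ℂ)‖ := by rw [hcdef, ← norm_inner_symm]
        _ = ‖(inner ℂ (ContinuousLinearMap.adjoint T x) x : ℂ)‖ := by rw [this]
        _ ≤ ‖ContinuousLinearMap.adjoint T x‖ * ‖x‖ := norm_inner_le_norm _ _
        _ = _ := by rw [hx, mul_one]
    have hc2a : c^2 ≤ a := by rw [ha_eq]; exact pow_le_pow_left₀ hc hca 2
    have hc2b : c^2 ≤ b := by rw [hb_eq]; exact pow_le_pow_left₀ hc hcb 2
    have e1 : c ^ (2*r) = ((c^2 : ℝ)) ^ r := by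
      rw [show (2:ℝ)*r = ((2:ℕ):ℝ)*r by norm_num, Real.rpow_mul hc, Real.rpow_natCast]
    have comb : (c^2 : ℝ) ≤ α * a + (1-α) * b := by nlinarith
    have step1 : ((c^2 : ℝ)) ^ r ≤ (α * a + (1-α)*b) ^ r :=
      Real.rpow_le_rpow (sq_nonneg c) comb (by linarith)
    have step2 : (α * a + (1-α)*b) ^ r ≤ α * a ^ r + (1-α) * b ^ r := by
      have := (convexOn_rpow hr).2 (Set.mem_Ici.mpr ha0) (Set.mem_Ici.mpr hb0)
        hα0 (show (0:ℝ) ≤ 1 - α by linarith) (show α + (1 - α) = (1:ℝ) by ring)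
      simpa [smul_eq_mul] using this
    have step3a : a ^ r ≤ RCLike.re (inner ℂ (P x) x : ℂ) := mccarthy A hA hr hx
    have step3b : b ^ r ≤ RCLike.re (inner ℂ (Q x) x : ℂ) := mccarthy B hB hr hx
    have hSval : RCLike.re (inner ℂ (S x) x : ℂ)
        = α * RCLike.re (inner ℂ (P x) x : ℂ) + (1-α) * RCLike.re (inner ℂ (Q x) x : ℂ) := by
      simp only [hSdef, ContinuousLinearMap.add_apply, ContinuousLinearMap.smul_apply,
        inner_add_left, map_add]
      rw [RCLike.real_smul_eq_coe_smul (K := ℂ), RCLike.real_smul_eq_coe_smul (K := ℂ),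
        inner_smul_left, inner_smul_left, RCLike.conj_ofReal, RCLike.conj_ofReal,
        RCLike.re_ofReal_mul, RCLike.re_ofReal_mul]
    have hSle : RCLike.re (inner ℂ (S x) x : ℂ) ≤ ‖S‖ := by
      calc RCLike.re (inner ℂ (S x) x : ℂ) ≤ ‖(inner ℂ (S x) x : ℂ)‖ := RCLike.re_le_norm _
        _ ≤ ‖S x‖ * ‖x‖ := norm_inner_le_norm _ _
        _ ≤ (‖S‖ * ‖x‖) * ‖x‖ := by
            exact mul_le_mul_of_nonneg_right (S.le_opNorm x) (norm_nonneg x)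
        _ = ‖S‖ := by rw [hx]; ring
    have : α * a ^ r + (1-α) * b ^ r ≤ RCLike.re (inner ℂ (S x) x : ℂ) := by
      rw [hSval]
      have h1 := mul_le_mul_of_nonneg_left step3a hα0
      have h2 := mul_le_mul_of_nonneg_left step3b (by linarith : (0:ℝ) ≤ 1 - α)
      linarith
    calc c ^ (2*r) = ((c^2 : ℝ)) ^ r := e1
      _ ≤ (α * a + (1-α)*b) ^ r := step1
      _ ≤ α * a ^ r + (1-α) * b ^ r := step2
      _ ≤ RCLike.re (inner ℂ (S x) x : ℂ) := this
      _ ≤ ‖S‖ := hSle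
  -- wrap up
  have hSnorm : (0:ℝ) ≤ ‖S‖ := norm_nonneg _
  set M := ‖S‖ ^ ((2*r)⁻¹) with hMdef
  have hM : 0 ≤ M := Real.rpow_nonneg hSnorm _
  have hnr : numRad T ≤ M := by
    apply Real.sSup_le _ hM
    rintro s ⟨x, hx, rfl⟩
    set c := ‖(inner ℂ (T x) x : ℂ)‖ with hcdef
    have hc : 0 ≤ c := norm_nonneg _
    have : c = (c ^ (2*r)) ^ ((2*r)⁻¹) := by
      rw [← Real.rpow_mul hc, mul_inv_cancel₀ h2r.ne', Real.rpow_one]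
    rw [this]
    exact Real.rpow_le_rpow (Real.rpow_nonneg hc _) (hkey x hx) (inv_nonneg.mpr h2r.le)
  have h0nr : 0 ≤ numRad T := by
    apply Real.sSup_nonneg
    rintro s ⟨x, hx, rfl⟩
    exact norm_nonneg _
  calc numRad T ^ (2*r) ≤ M ^ (2*r) := Real.rpow_le_rpow h0nr hnr h2r.le
    _ = ‖S‖ := by
        rw [hMdef, ← Real.rpow_mul hSnorm, inv_mul_cancel₀ h2r.ne', Real.rpow_one]
end

section
/- Let T be a bounded linear operator on a complex Hilbert space. Then w(T)² ≤ ‖α|T|² + (1-α)|T*|²‖ for every α ∈ [0,1]; in particular w(T)² ≤ min_{0≤α≤1} ‖α T*T + (1-α) TT*‖. -/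
open ContinuousLinearMap in
lemma key_ineq {H : Type*} [NormedAddCommGroup H] [InnerProductSpace ℂ H] [CompleteSpace H]
    (T : H →L[ℂ] H) (α : ℝ) (h0 : 0 ≤ α) (h1 : α ≤ 1) (x : H) (hx : ‖x‖ = 1) :
    ‖(inner ℂ (T x) x : ℂ)‖ ^ 2 ≤
      ‖α • (adjoint T * T) + (1 - α) • (T * adjoint T)‖ := by
  set A := α • (adjoint T * T) + (1 - α) • (T * adjoint T) with hA
  have hCS1 : ‖(inner ℂ (T x) x : ℂ)‖ ≤ ‖T x‖ := by
    simpa [hx] using norm_inner_le_norm (𝕜 := ℂ) (T x) x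
  have hadj : (inner ℂ (T x) x : ℂ) = inner ℂ x (adjoint T x) := (adjoint_inner_right T x x).symm
  have hCS2 : ‖(inner ℂ (T x) x : ℂ)‖ ≤ ‖adjoint T x‖ := by
    rw [hadj]
    simpa [hx] using norm_inner_le_norm (𝕜 := ℂ) x (adjoint T x)
  have hnn : (0:ℝ) ≤ ‖(inner ℂ (T x) x : ℂ)‖ := norm_nonneg _
  have h3 : ‖(inner ℂ (T x) x : ℂ)‖ ^ 2 ≤ α * ‖T x‖ ^ 2 + (1 - α) * ‖adjoint T x‖ ^ 2 := by
    have s1 : ‖(inner ℂ (T x) x : ℂ)‖ ^ 2 ≤ ‖T x‖ ^ 2 := pow_le_pow_left₀ hnn hCS1 2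
    have s2 : ‖(inner ℂ (T x) x : ℂ)‖ ^ 2 ≤ ‖adjoint T x‖ ^ 2 := pow_le_pow_left₀ hnn hCS2 2
    nlinarith [mul_le_mul_of_nonneg_left s1 h0, mul_le_mul_of_nonneg_left s2 (by linarith : (0:ℝ) ≤ 1 - α)]
  have h4 : α * ‖T x‖ ^ 2 + (1 - α) * ‖adjoint T x‖ ^ 2 = Complex.re (inner ℂ (A x) x : ℂ) := by
    have e1 : (inner ℂ ((adjoint T * T) x) x : ℂ) = inner ℂ (T x) (T x) := by
      simp [ContinuousLinearMap.mul_apply, adjoint_inner_left]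
    have e2 : (inner ℂ ((T * adjoint T) x) x : ℂ) = inner ℂ (adjoint T x) (adjoint T x) := by
      have h := adjoint_inner_left (adjoint T) x (adjoint T x)
      rw [adjoint_adjoint] at h
      simpa [ContinuousLinearMap.mul_apply] using h
    have hin : (inner ℂ (A x) x : ℂ)
        = ((α * ‖T x‖ ^ 2 + (1 - α) * ‖adjoint T x‖ ^ 2 : ℝ) : ℂ) := by
      rw [hA]
      simp only [ContinuousLinearMap.add_apply, ContinuousLinearMap.smul_apply,
        inner_add_left, ← Complex.coe_smul, inner_smul_left, e1, e2,
        inner_self_eq_norm_sq_to_K, Complex.conj_ofReal]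
      push_cast
      ring_nf
      rfl
    rw [hin, Complex.ofReal_re]
  have h5 : Complex.re (inner ℂ (A x) x : ℂ) ≤ ‖A‖ := by
    have := norm_inner_le_norm (𝕜 := ℂ) (A x) x
    have hre : Complex.re (inner ℂ (A x) x : ℂ) ≤ ‖(inner ℂ (A x) x : ℂ)‖ := Complex.re_le_norm _
    have hAx : ‖A x‖ ≤ ‖A‖ := by simpa [hx] using A.le_opNorm x
    calc Complex.re (inner ℂ (A x) x : ℂ) ≤ ‖(inner ℂ (A x) x : ℂ)‖ := hre
      _ ≤ ‖A x‖ * ‖x‖ := this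
      _ ≤ ‖A‖ := by rw [hx, mul_one]; exact hAx
  linarith

open ContinuousLinearMap in
theorem stmt4 {H : Type*} [NormedAddCommGroup H] [InnerProductSpace ℂ H] [CompleteSpace H]
    (T : H →L[ℂ] H) :
    (∀ α : ℝ, 0 ≤ α → α ≤ 1 →
      numRad T ^ 2 ≤
        ‖α • (ContinuousLinearMap.adjoint T * T) + (1 - α) • (T * ContinuousLinearMap.adjoint T)‖) ∧
    numRad T ^ 2 ≤
      sInf {s : ℝ | ∃ α : ℝ, 0 ≤ α ∧ α ≤ 1 ∧
        s = ‖α • (ContinuousLinearMap.adjoint T * T) +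
              (1 - α) • (T * ContinuousLinearMap.adjoint T)‖} := by
  have main : ∀ α : ℝ, 0 ≤ α → α ≤ 1 →
      numRad T ^ 2 ≤ ‖α • (adjoint T * T) + (1 - α) • (T * adjoint T)‖ := by
    intro α h0 h1
    set A := α • (adjoint T * T) + (1 - α) • (T * adjoint T) with hA
    have hub : numRad T ≤ Real.sqrt ‖A‖ := by
      apply Real.sSup_le _ (Real.sqrt_nonneg _)
      rintro r ⟨x, hx, rfl⟩
      rw [Real.le_sqrt (norm_nonneg _) (norm_nonneg _)]
      exact key_ineq T α h0 h1 x hx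
    have hnn : 0 ≤ numRad T := by
      apply Real.sSup_nonneg
      rintro r ⟨x, hx, rfl⟩
      exact norm_nonneg _
    calc numRad T ^ 2 ≤ Real.sqrt ‖A‖ ^ 2 := by
          exact pow_le_pow_left₀ hnn hub 2
      _ = ‖A‖ := Real.sq_sqrt (norm_nonneg _)
  refine ⟨main, ?_⟩
  have hne : {s : ℝ | ∃ α : ℝ, 0 ≤ α ∧ α ≤ 1 ∧
      s = ‖α • (adjoint T * T) + (1 - α) • (T * adjoint T)‖}.Nonempty :=
    ⟨‖(0:ℝ) • (adjoint T * T) + (1 - (0:ℝ)) • (T * adjoint T)‖, 0, le_refl 0, zero_le_one, rfl⟩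
  refine le_csInf hne ?_
  rintro s ⟨α, h0, h1, rfl⟩
  exact main α h0 h1
end

section
/- Buzano's inequality: Let a, b, e be vectors in a complex Hilbert space with ‖e‖ = 1. Then |⟨a,e⟩⟨e,b⟩| ≤ (1/2)(‖a‖·‖b‖ + |⟨a,b⟩|). -/
theorem stmt8 {H : Type*} [NormedAddCommGroup H] [InnerProductSpace ℂ H]
    (a b e : H) (he : ‖e‖ = 1) :
    ‖(inner ℂ a e : ℂ) * (inner ℂ e b : ℂ)‖ ≤ (1 / 2) * (‖a‖ * ‖b‖ + ‖(inner ℂ a b : ℂ)‖) := by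
  set c : ℂ := inner ℂ e b with hc
  set u : H := (2 * c) • e - b with hu
  have hee : (inner ℂ e e : ℂ) = 1 := by
    rw [inner_self_eq_norm_sq_to_K, he]; norm_num
  have hnormu : ‖u‖ = ‖b‖ := by
    have h2 : ‖u‖ ^ 2 = ‖b‖ ^ 2 := by
      have h := norm_sub_sq (𝕜 := ℂ) ((2 * c) • e) b
      rw [← hu, norm_smul, he, mul_one, inner_smul_left, ← hc] at h
      have hcc : (starRingEnd ℂ) (2 * c) * c = RCLike.ofReal (K := ℂ) (2 * ‖c‖ ^ 2) := by
        rw [map_mul, mul_assoc, RCLike.conj_mul, Complex.conj_ofNat, RCLike.ofReal_mul,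
          RCLike.ofReal_pow, RCLike.ofReal_ofNat]
      rw [hcc, RCLike.ofReal_re] at h
      rw [h]
      simp only [norm_mul, Complex.norm_ofNat]
      ring
    calc ‖u‖ = Real.sqrt (‖u‖ ^ 2) := (Real.sqrt_sq (norm_nonneg u)).symm
    _ = Real.sqrt (‖b‖ ^ 2) := by rw [h2]
    _ = ‖b‖ := Real.sqrt_sq (norm_nonneg b)
  have hcs : ‖(inner ℂ a u : ℂ)‖ ≤ ‖a‖ * ‖b‖ := by
    calc ‖(inner ℂ a u : ℂ)‖ ≤ ‖a‖ * ‖u‖ := norm_inner_le_norm a u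
    _ = ‖a‖ * ‖b‖ := by rw [hnormu]
  have hinner : (inner ℂ a u : ℂ) = 2 * (inner ℂ a e * c) - inner ℂ a b := by
    rw [hu, inner_sub_right, inner_smul_right]
    ring
  have key : 2 * ‖(inner ℂ a e : ℂ) * c‖ ≤ ‖a‖ * ‖b‖ + ‖(inner ℂ a b : ℂ)‖ := by
    have : (2 : ℂ) * (inner ℂ a e * c) = inner ℂ a u + inner ℂ a b := by rw [hinner]; ring
    calc 2 * ‖(inner ℂ a e : ℂ) * c‖ = ‖(2 : ℂ) * (inner ℂ a e * c)‖ := by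
          rw [norm_mul]; simp
    _ = ‖(inner ℂ a u : ℂ) + inner ℂ a b‖ := by rw [this]
    _ ≤ ‖(inner ℂ a u : ℂ)‖ + ‖(inner ℂ a b : ℂ)‖ := norm_add_le _ _
    _ ≤ ‖a‖ * ‖b‖ + ‖(inner ℂ a b : ℂ)‖ := by linarith
  linarith
end

section
/- Let T be a bounded linear operator on a complex Hilbert space and x a unit vector. Then for all real r ≥ 1, |⟨Tx,x⟩|^{2r} ≤ (1/2)|⟨T²x,x⟩|^r + (1/4)⟨(|T|^{2r} + |T*|^{2r})x, x⟩. -/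
/-- Tangent line inequality for `t ^ r`, `r ≥ 1`, on `[0, ∞)`. -/
lemma tangent_rpow' {lam t r : ℝ} (hlam : 0 ≤ lam) (ht : 0 ≤ t) (hr : 1 ≤ r) :
    lam ^ r + r * lam ^ (r - 1) * (t - lam) ≤ t ^ r := by
  rcases eq_or_lt_of_le hlam with h0 | hpos
  · rw [← h0]
    rcases eq_or_lt_of_le hr with h1 | h1
    · rw [← h1]
      simp [Real.rpow_one]
    · rw [Real.zero_rpow (by linarith), Real.zero_rpow (by linarith)]
      simpa using Real.rpow_nonneg ht r
  · have hs : -1 ≤ (t - lam) / lam := by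
      rw [le_div_iff₀ hpos]; linarith
    have hb := one_add_mul_self_le_rpow_one_add hs hr
    have hmul := mul_le_mul_of_nonneg_left hb (Real.rpow_nonneg hlam r)
    calc lam ^ r + r * lam ^ (r - 1) * (t - lam)
        = lam ^ r * (1 + r * ((t - lam) / lam)) := by
          rw [Real.rpow_sub hpos, Real.rpow_one]
          field_simp
      _ ≤ lam ^ r * (1 + (t - lam) / lam) ^ r := hmul
      _ = t ^ r := by
          have h1s : 1 + (t - lam) / lam = t / lam := by field_simp; ring
          rw [h1s, ← Real.mul_rpow hlam (by positivity)]
          congr 1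
          field_simp

open ContinuousLinearMap in
/-- Hölder–McCarthy inequality. -/
lemma holder_mccarthy' {H : Type*} [NormedAddCommGroup H] [InnerProductSpace ℂ H]
    [CompleteSpace H] (B : H →L[ℂ] H) (hB : 0 ≤ B) (x : H) (hx : ‖x‖ = 1)
    (r : ℝ) (hr : 1 ≤ r) :
    ((inner ℂ (B x) x : ℂ)).re ^ r ≤ ((inner ℂ ((CFC.rpow B r) x) x : ℂ)).re := by
  have hBpos : B.IsPositive := (ContinuousLinearMap.nonneg_iff_isPositive B).1 hB
  have hBsa : IsSelfAdjoint B := hBpos.isSelfAdjoint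
  set lam : ℝ := ((inner ℂ (B x) x : ℂ)).re with hlamdef
  have hlam : 0 ≤ lam := hBpos.re_inner_nonneg_left x
  have hspec : ∀ t ∈ spectrum ℝ B, 0 ≤ t := fun t ht => spectrum_nonneg_of_nonneg hB ht
  have hrw : CFC.rpow B r = cfc (fun t : ℝ => ((t.toNNReal : ℝ) ^ r : ℝ)) B := by
    rw [CFC.rpow, cfc_nnreal_eq_real _ _ hB]
    exact cfc_congr fun t ht => by simp [NNReal.coe_rpow]
  set d : ℝ := r * lam ^ (r - 1) with hd
  set c : ℝ := lam ^ r - d * lam with hc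
  have hcont : Continuous (fun t : ℝ => ((t.toNNReal : ℝ) ^ r : ℝ)) := by
    have h1 : Continuous (fun t : ℝ => (t.toNNReal : ℝ)) :=
      continuous_real_toNNReal.subtype_val
    exact continuous_iff_continuousAt.2 fun t =>
      (Real.continuousAt_rpow_const _ r (Or.inr (by linarith))).comp h1.continuousAt
  have hle : cfc (fun t : ℝ => c + d * t) B ≤ cfc (fun t : ℝ => ((t.toNNReal : ℝ) ^ r : ℝ)) B := by
    refine cfc_mono (fun t ht => ?_) (by fun_prop) hcont.continuousOn
    have ht0 : 0 ≤ t := hspec t ht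
    have htan := tangent_rpow' hlam ht0 hr
    rw [Real.coe_toNNReal t ht0]
    calc c + d * t = lam ^ r + r * lam ^ (r - 1) * (t - lam) := by rw [hc, hd]; ring
      _ ≤ t ^ r := htan
  have haffine : cfc (fun t : ℝ => c + d * t) B = algebraMap ℝ (H →L[ℂ] H) c + d • B := by
    rw [cfc_add B (fun _ => c) (fun t => d * t) (by fun_prop) (by fun_prop),
      cfc_const c B, cfc_const_mul d (fun t : ℝ => t) B (by fun_prop), cfc_id' ℝ B]
  rw [hrw]
  have hineq := ((ContinuousLinearMap.le_def _ _).1 hle).re_inner_nonneg_left x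
  rw [haffine] at hineq
  have hmapre : ((inner ℂ ((algebraMap ℝ (H →L[ℂ] H) c) x) x : ℂ)).re = c := by
    rw [Algebra.algebraMap_eq_smul_one]
    simp only [ContinuousLinearMap.smul_apply, ContinuousLinearMap.one_apply]
    rw [RCLike.real_smul_eq_coe_smul (K := ℂ), inner_smul_left, inner_self_eq_norm_sq_to_K]
    simp [hx]
  have hsmre : ((inner ℂ ((d • B) x) x : ℂ)).re = d * lam := by
    simp only [ContinuousLinearMap.smul_apply]
    rw [RCLike.real_smul_eq_coe_smul (K := ℂ), inner_smul_left]
    simp [Complex.mul_re, hlamdef]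
  have hsum : lam ^ r = c + d * lam := by rw [hc]; ring
  simp only [ContinuousLinearMap.sub_apply, inner_sub_left, map_sub,
    ContinuousLinearMap.add_apply, inner_add_left, map_add, RCLike.re_to_complex] at hineq
  rw [hmapre, hsmre] at hineq
  rw [hsum]
  linarith

/-- Buzano's inequality. -/
lemma buzano' {H : Type*} [NormedAddCommGroup H] [InnerProductSpace ℂ H]
    (a b e : H) (he : ‖e‖ = 1) :
    2 * ‖(inner ℂ a e : ℂ) * (inner ℂ e b : ℂ)‖ ≤ ‖a‖ * ‖b‖ + ‖(inner ℂ a b : ℂ)‖ := by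
  set c : ℂ := (inner ℂ e b : ℂ) with hc
  set u : H := (2 * c) • e - b with hu
  have hcc : RCLike.re ((starRingEnd ℂ) (2 * c) * c) = 2 * ‖c‖ ^ 2 := by
    simp only [RCLike.re_to_complex, Complex.mul_re, Complex.sq_norm,
      Complex.normSq_apply, map_mul, Complex.conj_re, Complex.conj_im]
    simp [Complex.mul_re, Complex.mul_im]
    ring
  have hnormsq : ‖u‖ ^ 2 = ‖b‖ ^ 2 := by
    rw [hu, @norm_sub_sq ℂ, inner_smul_left, ← hc, hcc, norm_smul]
    simp [he, Complex.sq_norm]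
    rw [mul_pow, Complex.sq_norm]
    simp [Complex.normSq_apply, Complex.mul_re, Complex.mul_im,
      Complex.sq_norm]
    ring
  have hun : ‖u‖ = ‖b‖ := by
    have h1 := norm_nonneg u
    have h2 := norm_nonneg b
    nlinarith
  have hCS : ‖(inner ℂ a u : ℂ)‖ ≤ ‖a‖ * ‖b‖ := by
    calc ‖(inner ℂ a u : ℂ)‖ ≤ ‖a‖ * ‖u‖ := norm_inner_le_norm a u
      _ = ‖a‖ * ‖b‖ := by rw [hun]
  have hexp : (inner ℂ a u : ℂ) = 2 * c * (inner ℂ a e : ℂ) - (inner ℂ a b : ℂ) := by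
    rw [hu, inner_sub_right, inner_smul_right]
  have htri : 2 * ‖(inner ℂ a e : ℂ) * c‖ ≤ ‖(inner ℂ a u : ℂ)‖ + ‖(inner ℂ a b : ℂ)‖ := by
    have h2 : (2 : ℂ) * c * (inner ℂ a e : ℂ) = (inner ℂ a u : ℂ) + (inner ℂ a b : ℂ) := by
      rw [hexp]; ring
    calc 2 * ‖(inner ℂ a e : ℂ) * c‖ = ‖(2 : ℂ) * c * (inner ℂ a e : ℂ)‖ := by
          rw [norm_mul, norm_mul, norm_mul]; simp; ring
      _ = ‖(inner ℂ a u : ℂ) + (inner ℂ a b : ℂ)‖ := by rw [h2]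
      _ ≤ _ := norm_add_le _ _
  linarith

/-- Midpoint convexity of `rpow` for `r ≥ 1`. -/
lemma half_add_rpow' {a b r : ℝ} (ha : 0 ≤ a) (hb : 0 ≤ b) (hr : 1 ≤ r) :
    ((a + b) / 2) ^ r ≤ (a ^ r + b ^ r) / 2 := by
  have key := NNReal.rpow_arith_mean_le_arith_mean2_rpow (1/2) (1/2) a.toNNReal b.toNNReal
    (by rw [← NNReal.coe_inj]; push_cast; norm_num) hr
  have := (NNReal.coe_le_coe).2 key
  push_cast at this
  rw [Real.coe_toNNReal a ha, Real.coe_toNNReal b hb] at this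
  calc ((a + b) / 2) ^ r = (1/2 * a + 1/2 * b) ^ r := by ring_nf
    _ ≤ 1/2 * a ^ r + 1/2 * b ^ r := this
    _ = (a ^ r + b ^ r) / 2 := by ring

open ContinuousLinearMap in
/-- The key estimate `‖S x‖ ^ (2r) ≤ Re⟪|S|^{2r} x, x⟫`. -/
lemma key_estimate' {H : Type*} [NormedAddCommGroup H] [InnerProductSpace ℂ H] [CompleteSpace H]
    (S : H →L[ℂ] H) (x : H) (hx : ‖x‖ = 1) (r : ℝ) (hr : 1 ≤ r) :
    ‖S x‖ ^ (2 * r) ≤ ((inner ℂ ((opRPow (absOp S) (2 * r)) x) x : ℂ)).re := by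
  set B : H →L[ℂ] H := ContinuousLinearMap.adjoint S * S with hBdef
  have hB : 0 ≤ B := by
    have := star_mul_self_nonneg S
    rwa [star_eq_adjoint] at this
  have hid : opRPow (absOp S) (2 * r) = CFC.rpow B r := by
    rw [opRPow, absOp, ← hBdef]
    have h2r : (0 : ℝ) ≤ 2 * r := by linarith
    set ξ : NNReal := (2 * r).toNNReal with hξ
    have hcoe : (ξ : ℝ) = 2 * r := Real.coe_toNNReal _ h2r
    have hs := CFC.rpow_sqrt_nnreal (A := H →L[ℂ] H) (a := B) (x := ξ) hB
    rw [hcoe] at hs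
    have h2 : (2 * r) / 2 = r := by ring
    rw [h2] at hs
    exact hs
  have hnorm : ‖S x‖ ^ 2 = ((inner ℂ (B x) x : ℂ)).re := by
    rw [hBdef]
    rw [ContinuousLinearMap.mul_apply, ContinuousLinearMap.adjoint_inner_left]
    rw [← RCLike.re_to_complex, @inner_self_eq_norm_sq ℂ]
  have hpow : ‖S x‖ ^ (2 * r) = (‖S x‖ ^ 2) ^ r := by
    rw [show ((‖S x‖ ^ 2 : ℝ)) = ‖S x‖ ^ ((2 : ℕ) : ℝ) from (Real.rpow_natCast _ 2).symm]
    rw [← Real.rpow_mul (norm_nonneg _)]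
    norm_num
  rw [hid, hpow, hnorm]
  exact holder_mccarthy' B hB x hx r hr

theorem stmt9 {H : Type*} [NormedAddCommGroup H] [InnerProductSpace ℂ H] [CompleteSpace H]
    (T : H →L[ℂ] H) (x : H) (hx : ‖x‖ = 1) (r : ℝ) (hr : 1 ≤ r) :
    ‖(inner ℂ (T x) x : ℂ)‖ ^ (2 * r) ≤
      (1 / 2) * ‖(inner ℂ ((T * T) x) x : ℂ)‖ ^ r +
        (1 / 4) * ((inner ℂ ((opRPow (absOp T) (2 * r) +
          opRPow (absOp (ContinuousLinearMap.adjoint T)) (2 * r)) x) x : ℂ)).re := by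
  set N : ℝ := ‖(inner ℂ (T x) x : ℂ)‖ with hN
  set M : ℝ := ‖(inner ℂ ((T * T) x) x : ℂ)‖ with hM
  set A : ℝ := ‖T x‖ with hA
  set Bb : ℝ := ‖ContinuousLinearMap.adjoint T x‖ with hBb
  -- Buzano applied to a = T x, b = T* x, e = x
  have hbuz := buzano' (T x) (ContinuousLinearMap.adjoint T x) x hx
  rw [ContinuousLinearMap.adjoint_inner_right] at hbuz
  have hsq : 2 * N ^ 2 ≤ A * Bb + M := by
    have h1 : (inner ℂ (T x) x : ℂ) * (inner ℂ (T x) x : ℂ) = (inner ℂ (T x) x : ℂ) ^ 2 := by ring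
    rw [h1, norm_pow] at hbuz
    have h2 : (inner ℂ (T x) (ContinuousLinearMap.adjoint T x) : ℂ) =
        (inner ℂ ((T * T) x) x : ℂ) := by
      rw [ContinuousLinearMap.adjoint_inner_right, ContinuousLinearMap.mul_apply]
    rw [h2] at hbuz
    linarith
  have hkey1 := key_estimate' T x hx r hr
  have hkey2 := key_estimate' (ContinuousLinearMap.adjoint T) x hx r hr
  set P : ℝ := ((inner ℂ ((opRPow (absOp T) (2 * r)) x) x : ℂ)).re with hP
  set Q : ℝ := ((inner ℂ ((opRPow (absOp (ContinuousLinearMap.adjoint T)) (2 * r)) x) x : ℂ)).re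
    with hQ
  have hsplit : ((inner ℂ ((opRPow (absOp T) (2 * r) +
      opRPow (absOp (ContinuousLinearMap.adjoint T)) (2 * r)) x) x : ℂ)).re = P + Q := by
    rw [ContinuousLinearMap.add_apply, inner_add_left]
    simp [hP, hQ]
  rw [hsplit]
  -- nonnegativity facts
  have hN0 : 0 ≤ N := norm_nonneg _
  have hM0 : 0 ≤ M := norm_nonneg _
  have hA0 : 0 ≤ A := norm_nonneg _
  have hBb0 : 0 ≤ Bb := norm_nonneg _
  have hr0 : 0 ≤ r := by linarith
  -- chain of inequalities
  have step1 : N ^ (2 * r) = (N ^ 2) ^ r := by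
    rw [show ((N ^ 2 : ℝ)) = N ^ ((2 : ℕ) : ℝ) from (Real.rpow_natCast _ 2).symm]
    rw [← Real.rpow_mul hN0]
    norm_num
  have step2 : (N ^ 2) ^ r ≤ ((A * Bb + M) / 2) ^ r := by
    apply Real.rpow_le_rpow (by positivity) (by linarith) hr0
  have step3 : ((A * Bb + M) / 2) ^ r ≤ ((A * Bb) ^ r + M ^ r) / 2 :=
    half_add_rpow' (by positivity) hM0 hr
  have step4 : (A * Bb) ^ r ≤ (A ^ (2 * r) + Bb ^ (2 * r)) / 2 := by
    have hab : (A * Bb) ^ r = A ^ r * Bb ^ r := Real.mul_rpow hA0 hBb0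
    have ha2 : (A ^ r) ^ 2 = A ^ (2 * r) := by
      rw [show (((A ^ r) ^ 2 : ℝ)) = (A ^ r) ^ ((2 : ℕ) : ℝ) from (Real.rpow_natCast _ 2).symm]
      rw [← Real.rpow_mul hA0]
      norm_num
      rw [mul_comm]
    have hb2 : (Bb ^ r) ^ 2 = Bb ^ (2 * r) := by
      rw [show (((Bb ^ r) ^ 2 : ℝ)) = (Bb ^ r) ^ ((2 : ℕ) : ℝ) from (Real.rpow_natCast _ 2).symm]
      rw [← Real.rpow_mul hBb0]
      norm_num
      rw [mul_comm]
    have hamgm : A ^ r * Bb ^ r ≤ ((A ^ r) ^ 2 + (Bb ^ r) ^ 2) / 2 := by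
      nlinarith [sq_nonneg (A ^ r - Bb ^ r)]
    rw [hab, ← ha2, ← hb2]
    exact hamgm
  calc N ^ (2 * r) = (N ^ 2) ^ r := step1
    _ ≤ ((A * Bb + M) / 2) ^ r := step2
    _ ≤ ((A * Bb) ^ r + M ^ r) / 2 := step3
    _ ≤ ((A ^ (2 * r) + Bb ^ (2 * r)) / 2 + M ^ r) / 2 := by linarith
    _ ≤ ((P + Q) / 2 + M ^ r) / 2 := by linarith
    _ = (1 / 2) * M ^ r + (1 / 4) * (P + Q) := by ring
end

section
/- Let H₁, H₂ be complex Hilbert spaces and let 𝕋 be the off-diagonal block operator on H₁ ⊕ H₂ given by 𝕋(x,y) = (By, Cx), with B : H₂ → H₁ and C : H₁ → H₂ bounded. Then for every α ∈ [0,1], w(𝕋)² ≤ max{‖(1-α)BB* + αC*C‖, ‖αB*B + (1-α)CC*‖}. -/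
private lemma stmt14_aux (α a b c d p q r NP NQ M : ℝ)
    (hα0 : 0 ≤ α) (hα1 : α ≤ 1) (hr : 0 ≤ r)
    (hz2 : p ^ 2 + q ^ 2 = 1)
    (hb1 : r ≤ a * p + b * q) (hb2 : r ≤ c * q + d * p)
    (hPx : (1 - α) * c ^ 2 + α * b ^ 2 ≤ NP * p ^ 2)
    (hQy : α * a ^ 2 + (1 - α) * d ^ 2 ≤ NQ * q ^ 2)
    (hPM : NP ≤ M) (hQM : NQ ≤ M)
    (hp : 0 ≤ p) (hq : 0 ≤ q) : r ^ 2 ≤ M := by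
  have h1 : 0 ≤ a * p + b * q := le_trans hr hb1
  have h2 : 0 ≤ c * q + d * p := le_trans hr hb2
  have step1 : r ^ 2 ≤ α * (a * p + b * q) ^ 2 + (1 - α) * (c * q + d * p) ^ 2 := by
    nlinarith [mul_le_mul hb1 hb1 hr h1, mul_le_mul hb2 hb2 hr h2]
  have step2 : (a * p + b * q) ^ 2 ≤ (a ^ 2 + b ^ 2) * (p ^ 2 + q ^ 2) := by
    nlinarith [sq_nonneg (a * q - b * p)]
  have step3 : (c * q + d * p) ^ 2 ≤ (c ^ 2 + d ^ 2) * (p ^ 2 + q ^ 2) := by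
    nlinarith [sq_nonneg (c * p - d * q)]
  rw [hz2, mul_one] at step2 step3
  have step4 : r ^ 2 ≤ α * (a ^ 2 + b ^ 2) + (1 - α) * (c ^ 2 + d ^ 2) := by
    nlinarith [step1, step2, step3]
  have hMp : NP * p ^ 2 ≤ M * p ^ 2 := mul_le_mul_of_nonneg_right hPM (by positivity)
  have hMq : NQ * q ^ 2 ≤ M * q ^ 2 := mul_le_mul_of_nonneg_right hQM (by positivity)
  have hMsum : M * p ^ 2 + M * q ^ 2 = M := by rw [← mul_add, hz2, mul_one]
  linarith [step4, hPx, hQy, hMp, hMq]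

set_option maxHeartbeats 1000000 in
theorem stmt14 {H₁ H₂ : Type*} [NormedAddCommGroup H₁] [InnerProductSpace ℂ H₁] [CompleteSpace H₁]
    [NormedAddCommGroup H₂] [InnerProductSpace ℂ H₂] [CompleteSpace H₂]
    (B : H₂ →L[ℂ] H₁) (C : H₁ →L[ℂ] H₂)
    (T : WithLp 2 (H₁ × H₂) →L[ℂ] WithLp 2 (H₁ × H₂))
    (hT : ∀ x : H₁, ∀ y : H₂,
      T ((WithLp.equiv 2 (H₁ × H₂)).symm (x, y)) = (WithLp.equiv 2 (H₁ × H₂)).symm (B y, C x))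
    (α : ℝ) (hα0 : 0 ≤ α) (hα1 : α ≤ 1) :
    numRad T ^ 2 ≤
      max ‖(1 - α) • (B ∘L ContinuousLinearMap.adjoint B) +
            α • (ContinuousLinearMap.adjoint C ∘L C)‖
          ‖α • (ContinuousLinearMap.adjoint B ∘L B) +
            (1 - α) • (C ∘L ContinuousLinearMap.adjoint C)‖ := by
  set P := (1 - α) • (B ∘L ContinuousLinearMap.adjoint B) +
            α • (ContinuousLinearMap.adjoint C ∘L C) with hPdef
  set Q := α • (ContinuousLinearMap.adjoint B ∘L B) +
            (1 - α) • (C ∘L ContinuousLinearMap.adjoint C) with hQdef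
  set M := max ‖P‖ ‖Q‖ with hMdef
  have hM : 0 ≤ M := le_trans (norm_nonneg P) (le_max_left _ _)
  have key : ∀ r ∈ {r : ℝ | ∃ z : WithLp 2 (H₁ × H₂), ‖z‖ = 1 ∧ r = ‖(inner ℂ (T z) z : ℂ)‖},
      r ≤ Real.sqrt M := by
    rintro r ⟨z, hz, rfl⟩
    set x := z.fst with hx
    set y := z.snd with hy
    have h1 : (WithLp.equiv 2 (H₁ × H₂)).symm (x, y) = z := rfl
    have hTz : T z = (WithLp.equiv 2 (H₁ × H₂)).symm (B y, C x) := by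
      rw [← h1]; exact hT x y
    have hinner : (inner ℂ (T z) z : ℂ) = inner ℂ (B y) x + inner ℂ (C x) y := by
      rw [hTz, WithLp.prod_inner_apply]
      simp
      rfl
    -- first bound
    have hb1 : ‖(inner ℂ (T z) z : ℂ)‖ ≤ ‖B y‖ * ‖x‖ + ‖C x‖ * ‖y‖ := by
      rw [hinner]
      exact (norm_add_le _ _).trans
        (add_le_add (norm_inner_le_norm _ _) (norm_inner_le_norm _ _))
    -- second bound via adjoints
    have e1 : ‖(inner ℂ (B y) x : ℂ)‖ = ‖(inner ℂ (ContinuousLinearMap.adjoint B x) y : ℂ)‖ := by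
      rw [← norm_inner_symm, ContinuousLinearMap.adjoint_inner_left]
    have e2 : ‖(inner ℂ (C x) y : ℂ)‖ = ‖(inner ℂ (ContinuousLinearMap.adjoint C y) x : ℂ)‖ := by
      rw [← norm_inner_symm, ContinuousLinearMap.adjoint_inner_left]
    have hb2 : ‖(inner ℂ (T z) z : ℂ)‖ ≤
        ‖ContinuousLinearMap.adjoint B x‖ * ‖y‖ + ‖ContinuousLinearMap.adjoint C y‖ * ‖x‖ := by
      rw [hinner]
      refine (norm_add_le _ _).trans (add_le_add ?_ ?_)
      · rw [e1]; exact norm_inner_le_norm _ _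
      · rw [e2]; exact norm_inner_le_norm _ _
    -- norm identity for P
    have hPx : (1 - α) * ‖ContinuousLinearMap.adjoint B x‖ ^ 2 + α * ‖C x‖ ^ 2
        ≤ ‖P‖ * ‖x‖ ^ 2 := by
      have c1 : (inner ℂ (P x) x : ℂ) =
          ((1 - α : ℝ) : ℂ) * (‖ContinuousLinearMap.adjoint B x‖ : ℂ) ^ 2 +
          ((α : ℝ) : ℂ) * (‖C x‖ : ℂ) ^ 2 := by
        have e3 : (inner ℂ (B (ContinuousLinearMap.adjoint B x)) x : ℂ)
            = (‖ContinuousLinearMap.adjoint B x‖ : ℂ) ^ 2 := by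
          rw [← ContinuousLinearMap.adjoint_inner_right]
          exact inner_self_eq_norm_sq_to_K _
        have e4 : (inner ℂ (ContinuousLinearMap.adjoint C (C x)) x : ℂ)
            = (‖C x‖ : ℂ) ^ 2 := by
          rw [ContinuousLinearMap.adjoint_inner_left]
          exact inner_self_eq_norm_sq_to_K _
        rw [hPdef]
        simp only [ContinuousLinearMap.add_apply, ContinuousLinearMap.smul_apply,
          ContinuousLinearMap.coe_comp', Function.comp_apply,
          RCLike.real_smul_eq_coe_smul (K := ℂ),
          inner_add_left, inner_smul_left, Complex.conj_ofReal, RCLike.conj_ofReal, e3, e4]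
        have hco : ∀ r : ℝ, @RCLike.ofReal ℂ _ r = (r : ℂ) := fun r => rfl
        simp only [hco]
      have c2 : (1 - α) * ‖ContinuousLinearMap.adjoint B x‖ ^ 2 + α * ‖C x‖ ^ 2
          = ‖(inner ℂ (P x) x : ℂ)‖ := by
        rw [c1]
        rw [show ((1 - α : ℝ) : ℂ) * (‖ContinuousLinearMap.adjoint B x‖ : ℂ) ^ 2 +
            ((α : ℝ) : ℂ) * (‖C x‖ : ℂ) ^ 2 =
            (((1 - α) * ‖ContinuousLinearMap.adjoint B x‖ ^ 2 + α * ‖C x‖ ^ 2 : ℝ) : ℂ) by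
          push_cast; ring]
        rw [Complex.norm_real, Real.norm_of_nonneg (by nlinarith [sq_nonneg (‖ContinuousLinearMap.adjoint B x‖), sq_nonneg (‖C x‖)])]
      rw [c2]
      calc ‖(inner ℂ (P x) x : ℂ)‖ ≤ ‖P x‖ * ‖x‖ := norm_inner_le_norm _ _
        _ ≤ (‖P‖ * ‖x‖) * ‖x‖ :=
            mul_le_mul_of_nonneg_right (P.le_opNorm x) (norm_nonneg x)
        _ = ‖P‖ * ‖x‖ ^ 2 := by ring
    -- norm identity for Q
    have hQy : α * ‖B y‖ ^ 2 + (1 - α) * ‖ContinuousLinearMap.adjoint C y‖ ^ 2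
        ≤ ‖Q‖ * ‖y‖ ^ 2 := by
      have c1 : (inner ℂ (Q y) y : ℂ) =
          ((α : ℝ) : ℂ) * (‖B y‖ : ℂ) ^ 2 +
          ((1 - α : ℝ) : ℂ) * (‖ContinuousLinearMap.adjoint C y‖ : ℂ) ^ 2 := by
        have e3 : (inner ℂ (ContinuousLinearMap.adjoint B (B y)) y : ℂ)
            = (‖B y‖ : ℂ) ^ 2 := by
          rw [ContinuousLinearMap.adjoint_inner_left]
          exact inner_self_eq_norm_sq_to_K _
        have e4 : (inner ℂ (C (ContinuousLinearMap.adjoint C y)) y : ℂ)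
            = (‖ContinuousLinearMap.adjoint C y‖ : ℂ) ^ 2 := by
          rw [← ContinuousLinearMap.adjoint_inner_right]
          exact inner_self_eq_norm_sq_to_K _
        rw [hQdef]
        simp only [ContinuousLinearMap.add_apply, ContinuousLinearMap.smul_apply,
          ContinuousLinearMap.coe_comp', Function.comp_apply,
          RCLike.real_smul_eq_coe_smul (K := ℂ),
          inner_add_left, inner_smul_left, Complex.conj_ofReal, RCLike.conj_ofReal, e3, e4]
        have hco : ∀ r : ℝ, @RCLike.ofReal ℂ _ r = (r : ℂ) := fun r => rfl
        simp only [hco]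
      have c2 : α * ‖B y‖ ^ 2 + (1 - α) * ‖ContinuousLinearMap.adjoint C y‖ ^ 2
          = ‖(inner ℂ (Q y) y : ℂ)‖ := by
        rw [c1]
        rw [show ((α : ℝ) : ℂ) * (‖B y‖ : ℂ) ^ 2 +
            ((1 - α : ℝ) : ℂ) * (‖ContinuousLinearMap.adjoint C y‖ : ℂ) ^ 2 =
            ((α * ‖B y‖ ^ 2 + (1 - α) * ‖ContinuousLinearMap.adjoint C y‖ ^ 2 : ℝ) : ℂ) by
          push_cast; ring]
        rw [Complex.norm_real, Real.norm_of_nonneg (by nlinarith [sq_nonneg (‖B y‖), sq_nonneg (‖ContinuousLinearMap.adjoint C y‖)])]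
      rw [c2]
      calc ‖(inner ℂ (Q y) y : ℂ)‖ ≤ ‖Q y‖ * ‖y‖ := norm_inner_le_norm _ _
        _ ≤ (‖Q‖ * ‖y‖) * ‖y‖ :=
            mul_le_mul_of_nonneg_right (Q.le_opNorm y) (norm_nonneg y)
        _ = ‖Q‖ * ‖y‖ ^ 2 := by ring
    have hz2 : ‖x‖ ^ 2 + ‖y‖ ^ 2 = 1 := by
      have := WithLp.prod_norm_sq_eq_of_L2 z
      rw [hz] at this; simpa using this.symm
    have hr0 : (0:ℝ) ≤ ‖(inner ℂ (T z) z : ℂ)‖ := norm_nonneg _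
    rw [Real.le_sqrt hr0 hM]
    exact stmt14_aux α ‖B y‖ ‖C x‖ ‖ContinuousLinearMap.adjoint B x‖
      ‖ContinuousLinearMap.adjoint C y‖ ‖x‖ ‖y‖ _ ‖P‖ ‖Q‖ M hα0 hα1 hr0 hz2 hb1 hb2
      hPx hQy (le_max_left _ _) (le_max_right _ _) (norm_nonneg _) (norm_nonneg _)
  have hle : numRad T ≤ Real.sqrt M := Real.sSup_le key (Real.sqrt_nonneg M)
  have h0 : 0 ≤ numRad T :=
    Real.sSup_nonneg (by rintro r ⟨z, _, rfl⟩; exact norm_nonneg _)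
  calc numRad T ^ 2 ≤ Real.sqrt M ^ 2 := pow_le_pow_left₀ h0 hle 2
    _ = M := Real.sq_sqrt hM
end

section
/- Let Sₙ be the n×n nilpotent shift matrix with subdiagonal entries equal to 1 and all other entries 0. Then the numerical radius of Sₙ equals cos(π/(n+1)). -/
open Real Finset

section aux

noncomputable def th (n : ℕ) : ℝ := Real.pi / (n + 1)
noncomputable def tt (n : ℕ) (k : ℕ) : ℝ := Real.sin (k * th n)


lemma th_pos (n : ℕ) : 0 < th n := by
  unfold th; positivity

lemma tt_zero (n : ℕ) : tt n 0 = 0 := by simp [tt]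

lemma tt_top (n : ℕ) : tt n (n + 1) = 0 := by
  unfold tt th
  push_cast
  rw [show ((n:ℝ)+1) * (Real.pi / ((n:ℝ)+1)) = Real.pi by field_simp]
  exact Real.sin_pi

lemma tt_pos (n : ℕ) {k : ℕ} (h1 : 1 ≤ k) (h2 : k ≤ n) : 0 < tt n k := by
  apply Real.sin_pos_of_pos_of_lt_pi
  · have := th_pos n
    have : (0:ℝ) < k := by exact_mod_cast h1
    positivity
  · unfold th
    rw [div_eq_mul_inv, ← mul_assoc]
    calc (k:ℝ) * Real.pi * ((n:ℝ)+1)⁻¹ < ((n:ℝ)+1) * Real.pi * ((n:ℝ)+1)⁻¹ := by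
          apply mul_lt_mul_of_pos_right
          · apply mul_lt_mul_of_pos_right _ Real.pi_pos
            have : (k:ℝ) ≤ n := by exact_mod_cast h2
            linarith
          · positivity
      _ = Real.pi := by field_simp
    
lemma tt_rec (n k : ℕ) : tt n (k+2) + tt n k = 2 * Real.cos (th n) * tt n (k+1) := by
  unfold tt
  push_cast
  rw [show ((k:ℝ)+2) * th n = ((k:ℝ)+1) * th n + th n by ring,
    show (k:ℝ) * th n = ((k:ℝ)+1) * th n - th n by ring,
    Real.sin_add, Real.sin_sub]
  ring

lemma amgm (a b c d : ℝ) (hc : 0 < c) (hd : 0 < d) :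
    a * b ≤ (1/2) * (c/d) * a^2 + (1/2) * (d/c) * b^2 := by
  rw [show (1/2) * (c/d) * a^2 + (1/2) * (d/c) * b^2 = (c^2*a^2 + d^2*b^2)/(2*(c*d)) by
      field_simp, le_div_iff₀ (by positivity)]
  nlinarith [sq_nonneg (c*a - d*b)]

lemma cos_th_nonneg (n : ℕ) (hn : 1 ≤ n) : 0 ≤ Real.cos (th n) := by
  apply Real.cos_nonneg_of_mem_Icc
  constructor
  · have h1 := th_pos n; have h2 := Real.pi_pos; linarith
  · unfold th
    rw [div_le_div_iff₀ (by positivity) (by norm_num)]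
    have : (1:ℝ) ≤ n := by exact_mod_cast hn
    nlinarith [Real.pi_pos]

lemma upper (n : ℕ) (hn : 1 ≤ n) (A : ℕ → ℝ) (hA : ∀ k, 0 ≤ A k) (hAn : A n = 0) :
    ∑ k ∈ range n, A k * A (k+1) ≤ Real.cos (th n) * ∑ k ∈ range n, (A k)^2 := by
  set c := Real.cos (th n) with hc
  set F : ℕ → ℝ := fun k => (1/2) * (tt n (k+2) / tt n (k+1)) * (A k)^2 with hF
  set G : ℕ → ℝ := fun k => (1/2) * (tt n k / tt n (k+1)) * (A k)^2 with hG
  have step1 : ∀ k ∈ range n, A k * A (k+1) ≤ F k + G (k+1) := by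
    intro k hk
    rw [mem_range] at hk
    rcases lt_or_eq_of_le (Nat.succ_le_of_lt hk) with h | h
    · -- k+1 < n, so t(k+1), t(k+2) > 0
      have h1 : 0 < tt n (k+1) := tt_pos n (by omega) (by omega)
      have h2 : 0 < tt n (k+2) := tt_pos n (by omega) (by omega)
      have := amgm (A k) (A (k+1)) (tt n (k+2)) (tt n (k+1)) h2 h1
      simp only [hF, hG]
      calc A k * A (k+1) ≤ (1/2) * (tt n (k+2)/tt n (k+1)) * (A k)^2
            + (1/2) * (tt n (k+1)/tt n (k+2)) * (A (k+1))^2 := this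
        _ = _ := by norm_num
    · -- k+1 = n
      have hk1 : k + 1 = n := h
      have : A (k+1) = 0 := by rw [hk1]; exact hAn
      rw [this]
      simp only [hF, hG, this]
      have h2 : tt n (k+2) = 0 := by rw [show k+2 = n+1 by omega]; exact tt_top n
      rw [h2]
      simp
  have step2 : ∑ k ∈ range n, (F k + G (k+1)) = ∑ k ∈ range n, (F k + G k) := by
    rw [Finset.sum_add_distrib, Finset.sum_add_distrib]
    congr 1
    -- ∑ k in range n, G (k+1) = ∑ k in range n, G k
    have l1 : ∑ k ∈ range (n+1), G k = ∑ k ∈ range n, G (k+1) + G 0 := Finset.sum_range_succ' G n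
    have l2 : ∑ k ∈ range (n+1), G k = ∑ k ∈ range n, G k + G n := Finset.sum_range_succ G n
    have hG0 : G 0 = 0 := by simp [hG, tt_zero]
    have hGn : G n = 0 := by simp [hG, hAn]
    linarith
  have step3 : ∀ k ∈ range n, F k + G k = c * (A k)^2 := by
    intro k hk
    rw [mem_range] at hk
    have h1 : 0 < tt n (k+1) := tt_pos n (by omega) (by omega)
    simp only [hF, hG]
    have := tt_rec n k
    field_simp
    nlinarith [this]
  calc ∑ k ∈ range n, A k * A (k+1) ≤ ∑ k ∈ range n, (F k + G (k+1)) :=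
        Finset.sum_le_sum step1
    _ = ∑ k ∈ range n, (F k + G k) := step2
    _ = ∑ k ∈ range n, c * (A k)^2 := Finset.sum_congr rfl step3
    _ = c * ∑ k ∈ range n, (A k)^2 := by rw [Finset.mul_sum]

lemma lower_eq (n : ℕ) (hn : 1 ≤ n) :
    ∑ k ∈ range n, tt n (k+1) * tt n (k+2)
      = Real.cos (th n) * ∑ k ∈ range n, (tt n (k+1))^2 := by
  have shift : ∑ k ∈ range n, tt n k * tt n (k+1) = ∑ k ∈ range n, tt n (k+1) * tt n (k+2) := by
    have l1 : ∑ k ∈ range (n+1), tt n k * tt n (k+1)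
        = ∑ k ∈ range n, tt n (k+1) * tt n (k+2) + tt n 0 * tt n 1 :=
      Finset.sum_range_succ' (fun k => tt n k * tt n (k+1)) n
    have l2 : ∑ k ∈ range (n+1), tt n k * tt n (k+1)
        = ∑ k ∈ range n, tt n k * tt n (k+1) + tt n n * tt n (n+1) :=
      Finset.sum_range_succ _ n
    rw [tt_zero] at l1
    rw [tt_top] at l2
    simp at l1 l2
    linarith
  have key : ∀ k, tt n (k+1) * tt n (k+2) + tt n k * tt n (k+1)
      = 2 * Real.cos (th n) * (tt n (k+1))^2 := by
    intro k
    have h := tt_rec n k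
    linear_combination (tt n (k+1)) * h
  have : ∑ k ∈ range n, (tt n (k+1) * tt n (k+2) + tt n k * tt n (k+1))
      = ∑ k ∈ range n, 2 * Real.cos (th n) * (tt n (k+1))^2 :=
    Finset.sum_congr rfl (fun k _ => key k)
  rw [Finset.sum_add_distrib] at this
  have h3 : ∑ k ∈ range n, 2 * Real.cos (th n) * (tt n (k+1))^2
      = 2 * (Real.cos (th n) * ∑ k ∈ range n, (tt n (k+1))^2) := by
    rw [← Finset.mul_sum, mul_assoc]
  rw [h3] at this
  linarith [shift, this]



noncomputable def yy (n : ℕ) (x : EuclideanSpace ℂ (Fin n)) (k : ℕ) : ℂ :=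
  if h : k < n then x ⟨k, h⟩ else 0


lemma inner_shift (n : ℕ) (x : EuclideanSpace ℂ (Fin n)) :
    (inner ℂ ((Matrix.toEuclideanCLM (𝕜 := ℂ)
        (fun i j => if (j:ℕ)+1 = (i:ℕ) then 1 else 0 : Matrix (Fin n) (Fin n) ℂ)) x) x : ℂ)
      = ∑ k ∈ range n, (starRingEnd ℂ) (yy n x k) * yy n x (k+1) := by
  set S : Matrix (Fin n) (Fin n) ℂ := fun i j => if (j:ℕ)+1 = (i:ℕ) then 1 else 0 with hS
  have happ : ∀ i : Fin n, (Matrix.toEuclideanCLM (𝕜 := ℂ) S) x i = Matrix.mulVec S (fun j => x j) i := by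
    intro i; rfl
  rw [PiLp.inner_apply]
  simp only [RCLike.inner_apply', happ]
  have step : ∀ i : Fin n, (starRingEnd ℂ) (Matrix.mulVec S (fun j => x j) i) * x i
      = ∑ j : Fin n, (if (j:ℕ)+1 = (i:ℕ) then 1 else 0) * ((starRingEnd ℂ) (x j) * x i) := by
    intro i
    rw [Matrix.mulVec, dotProduct, map_sum, Finset.sum_mul]
    congr 1; ext j
    rw [hS]
    by_cases h : (j:ℕ)+1 = (i:ℕ) <;> simp [h]
  rw [Finset.sum_congr rfl (fun i _ => step i), Finset.sum_comm]
  have step2 : ∀ j : Fin n, (∑ i : Fin n, (if (j:ℕ)+1 = (i:ℕ) then 1 else 0) * ((starRingEnd ℂ) (x j) * x i))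
      = (starRingEnd ℂ) (yy n x j) * yy n x (j+1) := by
    intro j
    by_cases h : (j:ℕ)+1 < n
    · rw [Finset.sum_eq_single (⟨(j:ℕ)+1, h⟩ : Fin n)]
      · simp [yy, h, j.isLt]
      · intro i _ hne
        have : ¬ ((j:ℕ)+1 = (i:ℕ)) := by
          intro hc; apply hne; exact Fin.ext hc.symm
        simp [this]
      · simp
    · have hz : yy n x ((j:ℕ)+1) = 0 := by simp [yy, h]
      rw [hz, mul_zero]
      apply Finset.sum_eq_zero
      intro i _
      have : ¬ ((j:ℕ)+1 = (i:ℕ)) := by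
        intro hc; exact h (hc ▸ i.isLt)
      simp [this]
  rw [Finset.sum_congr rfl (fun j _ => step2 j)]
  rw [← Fin.sum_univ_eq_sum_range (fun k => (starRingEnd ℂ) (yy n x k) * yy n x (k+1)) n]

lemma norm_sq_sum (n : ℕ) (x : EuclideanSpace ℂ (Fin n)) (hx : ‖x‖ = 1) :
    ∑ k ∈ range n, ‖yy n x k‖^2 = 1 := by
  have h := EuclideanSpace.norm_eq x
  rw [hx] at h
  have h2 : ∑ i : Fin n, ‖x i‖^2 = 1 := Real.sqrt_eq_one.mp h.symm
  rw [← h2, ← Fin.sum_univ_eq_sum_range (fun k => ‖yy n x k‖^2) n]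
  congr 1; ext i; simp [yy, i.isLt]

end aux

theorem stmt15 (n : ℕ) (hn : 1 ≤ n) :
    letI S : Matrix (Fin n) (Fin n) ℂ := fun i j => if (j : ℕ) + 1 = (i : ℕ) then 1 else 0
    numRad (Matrix.toEuclideanCLM (𝕜 := ℂ) S) = Real.cos (Real.pi / (n + 1)) := by
  show numRad (Matrix.toEuclideanCLM (𝕜 := ℂ)
      (fun i j => if (j : ℕ) + 1 = (i : ℕ) then 1 else 0 : Matrix (Fin n) (Fin n) ℂ))
    = Real.cos (Real.pi / (n + 1))
  have hth : Real.cos (Real.pi / (n + 1)) = Real.cos (th n) := rfl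
  rw [hth]
  set c := Real.cos (th n) with hc
  set T := Matrix.toEuclideanCLM (𝕜 := ℂ)
      (fun i j => if (j : ℕ) + 1 = (i : ℕ) then 1 else 0 : Matrix (Fin n) (Fin n) ℂ) with hT
  -- upper bound
  have hub : ∀ r ∈ {r : ℝ | ∃ x : EuclideanSpace ℂ (Fin n), ‖x‖ = 1
      ∧ r = ‖(inner ℂ (T x) x : ℂ)‖}, r ≤ c := by
    rintro r ⟨x, hx, rfl⟩
    rw [hT, inner_shift n x]
    calc ‖∑ k ∈ range n, (starRingEnd ℂ) (yy n x k) * yy n x (k+1)‖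
        ≤ ∑ k ∈ range n, ‖(starRingEnd ℂ) (yy n x k) * yy n x (k+1)‖ :=
          norm_sum_le _ _
      _ = ∑ k ∈ range n, ‖yy n x k‖ * ‖yy n x (k+1)‖ := by
          apply Finset.sum_congr rfl; intro k _
          rw [norm_mul, RCLike.norm_conj]
      _ ≤ c * ∑ k ∈ range n, ‖yy n x k‖^2 := by
          apply upper n hn _ (fun k => norm_nonneg _)
          simp [yy]
      _ = c := by rw [norm_sq_sum n x hx, mul_one]
  -- the maximizing vector
  set Q : ℝ := ∑ k ∈ range n, (tt n (k+1))^2 with hQ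
  have hQpos : 0 < Q := by
    apply Finset.sum_pos
    · intro k hk
      rw [mem_range] at hk
      have := tt_pos n (k := k+1) (by omega) (by omega)
      positivity
    · exact ⟨0, mem_range.mpr hn⟩
  set N : ℝ := Real.sqrt Q with hN
  have hNpos : 0 < N := Real.sqrt_pos.mpr hQpos
  have hN2 : N^2 = Q := Real.sq_sqrt hQpos.le
  set x : EuclideanSpace ℂ (Fin n) := WithLp.toLp 2 (fun i => ((tt n ((i:ℕ)+1) / N : ℝ) : ℂ)) with hxdef
  have hyy : ∀ k, k ≤ n → yy n x k = ((tt n (k+1) / N : ℝ) : ℂ) := by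
    intro k hk
    rcases lt_or_eq_of_le hk with h | h
    · simp [yy, h, hxdef]
    · subst h
      simp [yy, tt_top]
  have hxnorm : ‖x‖ = 1 := by
    rw [EuclideanSpace.norm_eq]
    have : ∑ i : Fin n, ‖x i‖^2 = 1 := by
      have : ∀ i : Fin n, ‖x i‖^2 = (tt n ((i:ℕ)+1))^2 / N^2 := by
        intro i
        rw [hxdef]
        simp only [PiLp.toLp_apply, Complex.norm_real, Real.norm_eq_abs]
        rw [sq_abs, div_pow]
      rw [Finset.sum_congr rfl (fun i _ => this i), ← Finset.sum_div, hN2]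
      rw [show (∑ i : Fin n, tt n ((i:ℕ)+1)^2) = Q from
        (Fin.sum_univ_eq_sum_range (fun k => (tt n (k+1))^2) n).trans hQ.symm]
      exact div_self hQpos.ne'
    rw [this, Real.sqrt_one]
  have hinner : (inner ℂ (T x) x : ℂ) = (c : ℂ) := by
    rw [hT, inner_shift n x]
    have : ∀ k ∈ range n, (starRingEnd ℂ) (yy n x k) * yy n x (k+1)
        = ((tt n (k+1) / N * (tt n (k+2) / N) : ℝ) : ℂ) := by
      intro k hk
      rw [mem_range] at hk
      rw [hyy k (by omega), hyy (k+1) (by omega), Complex.conj_ofReal, ← Complex.ofReal_mul]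
    rw [Finset.sum_congr rfl this, ← Complex.ofReal_sum]
    congr 1
    have : ∑ k ∈ range n, tt n (k+1) / N * (tt n (k+2) / N)
        = (∑ k ∈ range n, tt n (k+1) * tt n (k+2)) / N^2 := by
      rw [Finset.sum_div]
      apply Finset.sum_congr rfl; intro k _; ring
    rw [this, lower_eq n hn, hN2, ← hQ, mul_div_assoc, div_self hQpos.ne', mul_one]
  have hmem : c ∈ {r : ℝ | ∃ x : EuclideanSpace ℂ (Fin n), ‖x‖ = 1
      ∧ r = ‖(inner ℂ (T x) x : ℂ)‖} := by
    refine ⟨x, hxnorm, ?_⟩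
    rw [hinner, Complex.norm_real, Real.norm_eq_abs]
    exact (abs_of_nonneg (cos_th_nonneg n hn)).symm
  unfold numRad
  exact le_antisymm (csSup_le ⟨c, hmem⟩ hub) (le_csSup ⟨c, hub⟩ hmem)
end

section
/- Let 𝕊 = [[A, B],[C, D]] be a 2×2 block operator on H₁ ⊕ H₂. Then w(𝕊) ≤ (1/2)(w(A) + w(D)) + (1/2)√((w(A) - w(D))² + 4 w(𝕋)²), where 𝕋 = [[0, B],[C, 0]]. -/
lemma numRad_nonneg {H : Type*} [NormedAddCommGroup H] [InnerProductSpace ℂ H]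
    (T : H →L[ℂ] H) : 0 ≤ numRad T :=
  Real.sSup_nonneg (by rintro r ⟨x, hx, rfl⟩; positivity)

lemma numRad_bddAbove {H : Type*} [NormedAddCommGroup H] [InnerProductSpace ℂ H]
    (T : H →L[ℂ] H) :
    BddAbove {r : ℝ | ∃ x : H, ‖x‖ = 1 ∧ r = ‖(inner ℂ (T x) x : ℂ)‖} := by
  refine ⟨‖T‖, ?_⟩
  rintro r ⟨x, hx, rfl⟩
  calc ‖(inner ℂ (T x) x : ℂ)‖ ≤ ‖T x‖ * ‖x‖ := norm_inner_le_norm _ _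
    _ ≤ ‖T‖ * ‖x‖ * ‖x‖ := by
        have := T.le_opNorm x
        nlinarith [norm_nonneg x]
    _ = ‖T‖ := by rw [hx]; ring

lemma norm_inner_le_numRad {H : Type*} [NormedAddCommGroup H] [InnerProductSpace ℂ H]
    (T : H →L[ℂ] H) {x : H} (hx : ‖x‖ = 1) :
    ‖(inner ℂ (T x) x : ℂ)‖ ≤ numRad T :=
  le_csSup (numRad_bddAbove T) ⟨x, hx, rfl⟩

lemma norm_inner_le_numRad_sq {H : Type*} [NormedAddCommGroup H] [InnerProductSpace ℂ H]
    (T : H →L[ℂ] H) (x : H) :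
    ‖(inner ℂ (T x) x : ℂ)‖ ≤ numRad T * ‖x‖ ^ 2 := by
  rcases eq_or_ne x 0 with rfl | hx0
  · simp
  · have hxn : (0 : ℝ) < ‖x‖ := norm_pos_iff.mpr hx0
    set c : ℂ := ((‖x‖⁻¹ : ℝ) : ℂ)
    have hc : ‖c‖ = ‖x‖⁻¹ := by
      simp [c, abs_of_nonneg (inv_nonneg.mpr hxn.le)]
    have hu : ‖c • x‖ = 1 := by
      rw [norm_smul, hc]
      field_simp
    have h1 : ‖(inner ℂ (T (c • x)) (c • x) : ℂ)‖ ≤ numRad T := norm_inner_le_numRad T hu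
    have h2 : (inner ℂ (T (c • x)) (c • x) : ℂ)
        = (starRingEnd ℂ) c * c * inner ℂ (T x) x := by
      rw [map_smul, inner_smul_left, inner_smul_right]; ring
    rw [h2] at h1
    have h3 : ‖(starRingEnd ℂ) c * c * (inner ℂ (T x) x : ℂ)‖
        = ‖x‖⁻¹ * ‖x‖⁻¹ * ‖(inner ℂ (T x) x : ℂ)‖ := by
      rw [norm_mul, norm_mul, RCLike.norm_conj, hc]
    rw [h3] at h1
    have := mul_le_mul_of_nonneg_left h1 (le_of_lt (by positivity : (0:ℝ) < ‖x‖ ^ 2))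
    calc ‖(inner ℂ (T x) x : ℂ)‖
        = ‖x‖ ^ 2 * (‖x‖⁻¹ * ‖x‖⁻¹ * ‖(inner ℂ (T x) x : ℂ)‖) := by
          field_simp
      _ ≤ ‖x‖ ^ 2 * numRad T := this
      _ = numRad T * ‖x‖ ^ 2 := by ring

set_option maxHeartbeats 1000000 in
theorem stmt16 {H₁ H₂ : Type*} [NormedAddCommGroup H₁] [InnerProductSpace ℂ H₁] [CompleteSpace H₁]
    [NormedAddCommGroup H₂] [InnerProductSpace ℂ H₂] [CompleteSpace H₂]
    (A : H₁ →L[ℂ] H₁) (D : H₂ →L[ℂ] H₂) (B : H₂ →L[ℂ] H₁) (C : H₁ →L[ℂ] H₂)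
    (S T : WithLp 2 (H₁ × H₂) →L[ℂ] WithLp 2 (H₁ × H₂))
    (hS : ∀ x : H₁, ∀ y : H₂,
      S ((WithLp.equiv 2 (H₁ × H₂)).symm (x, y)) =
        (WithLp.equiv 2 (H₁ × H₂)).symm (A x + B y, C x + D y))
    (hT : ∀ x : H₁, ∀ y : H₂,
      T ((WithLp.equiv 2 (H₁ × H₂)).symm (x, y)) = (WithLp.equiv 2 (H₁ × H₂)).symm (B y, C x)) :
    numRad S ≤
      (1 / 2) * (numRad A + numRad D) +
        (1 / 2) * Real.sqrt ((numRad A - numRad D) ^ 2 + 4 * numRad T ^ 2) := by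
  have hA0 := numRad_nonneg A
  have hD0 := numRad_nonneg D
  have hT0 := numRad_nonneg T
  have hs0 : (0:ℝ) ≤ Real.sqrt ((numRad A - numRad D) ^ 2 + 4 * numRad T ^ 2) :=
    Real.sqrt_nonneg _
  apply Real.sSup_le
  swap
  · linarith
  rintro r ⟨z, hz, rfl⟩
  set x : H₁ := z.fst with hxdef
  set y : H₂ := z.snd with hydef
  have hzeq : z = (WithLp.equiv 2 (H₁ × H₂)).symm (x, y) := rfl
  set a : ℝ := ‖x‖ with hadef
  set b : ℝ := ‖y‖ with hbdef
  have ha0 : 0 ≤ a := norm_nonneg _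
  have hb0 : 0 ≤ b := norm_nonneg _
  have hab : a ^ 2 + b ^ 2 = 1 := by
    have := WithLp.prod_norm_sq_eq_of_L2 z
    rw [hz] at this
    simpa using this.symm
  -- expand the inner product
  have hSz : (inner ℂ (S z) z : ℂ)
      = inner ℂ (A x) x + (inner ℂ (B y) x + inner ℂ (C x) y) + inner ℂ (D y) y := by
    rw [hzeq, hS]
    rw [WithLp.prod_inner_apply]
    simp only [WithLp.equiv_symm_apply, WithLp.toLp_fst, WithLp.toLp_snd]
    rw [inner_add_left, inner_add_left]
    ring
  -- bound the off-diagonal part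
  have hmid : ‖(inner ℂ (B y) x + inner ℂ (C x) y : ℂ)‖ ≤ 2 * numRad T * (a * b) := by
    rcases eq_or_ne x 0 with hx0 | hx0
    · simp [hx0, hadef]
    rcases eq_or_ne y 0 with hy0 | hy0
    · simp [hy0, hbdef]
    have hap : (0:ℝ) < a := norm_pos_iff.mpr hx0
    have hbp : (0:ℝ) < b := norm_pos_iff.mpr hy0
    have h2 : (0:ℝ) < Real.sqrt 2 := by positivity
    set c : ℂ := (((Real.sqrt 2 * a)⁻¹ : ℝ) : ℂ)
    set d : ℂ := (((Real.sqrt 2 * b)⁻¹ : ℝ) : ℂ)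
    have hcn : ‖c‖ = (Real.sqrt 2 * a)⁻¹ := by
      simp only [c, Complex.norm_real, Real.norm_eq_abs]
      rw [abs_of_pos (by positivity)]
    have hdn : ‖d‖ = (Real.sqrt 2 * b)⁻¹ := by
      simp only [d, Complex.norm_real, Real.norm_eq_abs]
      rw [abs_of_pos (by positivity)]
    have hc2 : ‖c‖ * a = (Real.sqrt 2)⁻¹ := by
      rw [hcn]; field_simp [mul_comm]
    have hd2 : ‖d‖ * b = (Real.sqrt 2)⁻¹ := by
      rw [hdn]; field_simp [mul_comm]
    have hinv2 : ((Real.sqrt 2)⁻¹ : ℝ) ^ 2 = 1 / 2 := by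
      rw [inv_pow, Real.sq_sqrt] <;> norm_num
    set z' : WithLp 2 (H₁ × H₂) := (WithLp.equiv 2 (H₁ × H₂)).symm (c • x, d • y) with hz'
    have hz'norm : ‖z'‖ = 1 := by
      have hsq : ‖z'‖ ^ 2 = 1 := by
        rw [WithLp.prod_norm_sq_eq_of_L2]
        simp only [hz', WithLp.equiv_symm_apply, WithLp.toLp_fst, WithLp.toLp_snd]
        rw [norm_smul, norm_smul, ← hadef, ← hbdef, hc2, hd2, hinv2]
        norm_num
      nlinarith [norm_nonneg z', hsq]
    have hTz' : (inner ℂ (T z') z' : ℂ) = c * d * (inner ℂ (B y) x + inner ℂ (C x) y) := by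
      rw [hz', hT]
      rw [WithLp.prod_inner_apply]
      simp only [WithLp.equiv_symm_apply, WithLp.toLp_fst, WithLp.toLp_snd, map_smul]
      rw [inner_smul_left, inner_smul_right, inner_smul_left, inner_smul_right]
      have hcc : (starRingEnd ℂ) c = c := Complex.conj_ofReal _
      have hdd : (starRingEnd ℂ) d = d := Complex.conj_ofReal _
      rw [hcc, hdd]
      ring
    have hb1 : ‖(inner ℂ (T z') z' : ℂ)‖ ≤ numRad T := norm_inner_le_numRad T hz'norm
    rw [hTz', norm_mul, norm_mul, hcn, hdn] at hb1
    have hscale : (Real.sqrt 2 * a)⁻¹ * (Real.sqrt 2 * b)⁻¹ = (2 * (a * b))⁻¹ := by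
      have h2' : Real.sqrt 2 * Real.sqrt 2 = 2 := Real.mul_self_sqrt (by norm_num)
      rw [← mul_inv]
      congr 1
      calc Real.sqrt 2 * a * (Real.sqrt 2 * b)
          = Real.sqrt 2 * Real.sqrt 2 * (a * b) := by ring
        _ = 2 * (a * b) := by rw [h2']
    rw [hscale] at hb1
    have habp : (0:ℝ) < 2 * (a * b) := by positivity
    calc ‖(inner ℂ (B y) x + inner ℂ (C x) y : ℂ)‖
        = 2 * (a * b) * ((2 * (a * b))⁻¹ * ‖(inner ℂ (B y) x + inner ℂ (C x) y : ℂ)‖) := by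
          rw [← mul_assoc, mul_inv_cancel₀ habp.ne', one_mul]
      _ ≤ 2 * (a * b) * numRad T := mul_le_mul_of_nonneg_left hb1 habp.le
      _ = 2 * numRad T * (a * b) := by ring
  have hAx : ‖(inner ℂ (A x) x : ℂ)‖ ≤ numRad A * a ^ 2 := norm_inner_le_numRad_sq A x
  have hDy : ‖(inner ℂ (D y) y : ℂ)‖ ≤ numRad D * b ^ 2 := norm_inner_le_numRad_sq D y
  have hr : ‖(inner ℂ (S z) z : ℂ)‖
      ≤ numRad A * a ^ 2 + numRad D * b ^ 2 + 2 * numRad T * (a * b) := by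
    rw [hSz]
    calc ‖(inner ℂ (A x) x + (inner ℂ (B y) x + inner ℂ (C x) y) + inner ℂ (D y) y : ℂ)‖
        ≤ ‖(inner ℂ (A x) x : ℂ)‖ + ‖(inner ℂ (B y) x + inner ℂ (C x) y : ℂ)‖
            + ‖(inner ℂ (D y) y : ℂ)‖ := by
          refine le_trans (norm_add_le _ _) ?_
          have := norm_add_le ((inner ℂ (A x) x : ℂ)) ((inner ℂ (B y) x + inner ℂ (C x) y : ℂ))
          linarith
      _ ≤ numRad A * a ^ 2 + numRad D * b ^ 2 + 2 * numRad T * (a * b) := by linarith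
  refine hr.trans ?_
  -- final scalar inequality
  set wA := numRad A
  set wD := numRad D
  set wT := numRad T
  set s := Real.sqrt ((wA - wD) ^ 2 + 4 * wT ^ 2) with hsdef
  have hssq : s ^ 2 = (wA - wD) ^ 2 + 4 * wT ^ 2 := Real.sq_sqrt (by positivity)
  have huv : (a ^ 2 - b ^ 2) ^ 2 + (2 * (a * b)) ^ 2 = 1 := by
    have h := hab
    nlinarith [hab]
  set P := (wA - wD) * (a ^ 2 - b ^ 2) + 2 * wT * (2 * (a * b)) with hPdef
  have hPsq : P ^ 2 ≤ s ^ 2 := by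
    have hexp : s ^ 2 - P ^ 2 = ((wA - wD) * (2 * (a * b)) - 2 * wT * (a ^ 2 - b ^ 2)) ^ 2
        + ((wA - wD) ^ 2 + (2 * wT) ^ 2)
          * (1 - ((a ^ 2 - b ^ 2) ^ 2 + (2 * (a * b)) ^ 2)) := by
      rw [hssq, hPdef]; ring
    rw [huv] at hexp
    nlinarith [sq_nonneg ((wA - wD) * (2 * (a * b)) - 2 * wT * (a ^ 2 - b ^ 2)), hexp]
  have hP : P ≤ s := by nlinarith [hPsq, hs0]
  have hid : wA * a ^ 2 + wD * b ^ 2 + 2 * wT * (a * b)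
      = 1 / 2 * ((wA + wD) * (a ^ 2 + b ^ 2)) + 1 / 2 * P := by rw [hPdef]; ring
  have hab' : (wA + wD) * (a ^ 2 + b ^ 2) = wA + wD := by rw [hab]; ring
  linarith [hid, hab', hP]
end

section
/- Let p(z) = zⁿ + a_{n-1}z^{n-1} + ⋯ + a₁z + a₀ be a monic complex polynomial of degree n ≥ 2. Then every zero λ of p satisfies |λ| ≤ (1/2)(|a_{n-1}| + cos(π/n)) + (1/2)√((|a_{n-1}| - cos(π/n))² + 2(1 + Σ_{i=0}^{n-2}|a_i|²)). -/
open Finset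

private lemma sin_pos_aux (m k : ℕ) (hk1 : 1 ≤ k) (hk2 : k ≤ m) :
    0 < Real.sin (k * (Real.pi / (m + 1))) := by
  have hk0 : (0:ℝ) < k := by exact_mod_cast hk1
  have hm1 : (0:ℝ) < (m:ℝ) + 1 := by positivity
  have hθ : 0 < Real.pi / (m + 1) := by positivity
  apply Real.sin_pos_of_pos_of_lt_pi
  · positivity
  · have hkm : (k:ℝ) < (m:ℝ) + 1 := by exact_mod_cast Nat.lt_succ_of_le hk2
    calc (k:ℝ) * (Real.pi / (m+1)) < ((m:ℝ)+1) * (Real.pi / (m+1)) :=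
          (mul_lt_mul_of_pos_right hkm hθ)
      _ = Real.pi := by field_simp

private lemma sin_rec (θ x : ℝ) :
    Real.sin (x + 2*θ) = 2 * Real.cos θ * Real.sin (x + θ) - Real.sin x := by
  have e1 : Real.sin ((x+θ)+θ)
      = Real.sin (x+θ) * Real.cos θ + Real.cos (x+θ) * Real.sin θ := Real.sin_add _ _
  have e2 : Real.sin x = Real.sin (x+θ) * Real.cos θ - Real.cos (x+θ) * Real.sin θ := by
    have := Real.sin_sub (x+θ) θ
    simpa using this
  rw [show x + 2*θ = (x+θ)+θ by ring, e1, e2]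
  ring

/-- Fejér-type induction: for `θ = π/(m+1)`. -/
private lemma aux_ind (m : ℕ) (r : ℝ) (hr : 0 ≤ r) :
    ∀ j : ℕ, j + 1 ≤ m →
      r * ∑ i ∈ range j, r ^ (2*i)
        + (1/2) * (Real.sin ((j+2 : ℕ) * (Real.pi/(m+1))) /
            Real.sin ((j+1 : ℕ) * (Real.pi/(m+1)))) * r ^ (2*j)
      ≤ Real.cos (Real.pi/(m+1)) * ∑ i ∈ range (j+1), r ^ (2*i) := by
  set θ := Real.pi / (m+1) with hθdef
  intro j
  induction j with
  | zero =>
    intro hm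
    have hs1 : 0 < Real.sin ((1:ℕ) * θ) := sin_pos_aux m 1 le_rfl hm
    simp only [Nat.cast_one, one_mul] at hs1
    have h2 : Real.sin (((0:ℕ)+2 : ℕ) * θ) = 2 * Real.sin θ * Real.cos θ := by
      have harg : (((0:ℕ)+2 : ℕ) : ℝ) * θ = 2 * θ := by push_cast; ring
      rw [harg, Real.sin_two_mul]
    simp only [range_zero, sum_empty, mul_zero, zero_add, range_one, sum_singleton,
      pow_zero, mul_one, Nat.cast_one, one_mul, Nat.zero_add] at *
    rw [h2]
    rw [show 2 * Real.sin θ * Real.cos θ / Real.sin θ = 2 * Real.cos θ by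
      field_simp]
    linarith
  | succ j ih =>
    intro hjm
    have hle : j + 1 ≤ m := by omega
    have ih' := ih hle
    have hs2 : 0 < Real.sin ((j+1 : ℕ) * θ) := sin_pos_aux m (j+1) (by omega) (by omega)
    have hs3 : 0 < Real.sin ((j+2 : ℕ) * θ) := sin_pos_aux m (j+2) (by omega) (by omega)
    set s2 := Real.sin ((j+1 : ℕ) * θ) with hs2def
    set s3 := Real.sin ((j+2 : ℕ) * θ) with hs3def
    have hs4 : Real.sin ((j+3 : ℕ) * θ) = 2 * Real.cos θ * s3 - s2 := by
      have harg : ((j+3 : ℕ) : ℝ) * θ = ((j+1 : ℕ) : ℝ) * θ + 2*θ := by push_cast; ring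
      have harg2 : ((j+2 : ℕ) : ℝ) * θ = ((j+1 : ℕ) : ℝ) * θ + θ := by push_cast; ring
      rw [harg, sin_rec θ (((j+1 : ℕ) : ℝ) * θ), hs3def, hs2def, harg2]
    -- AM-GM step
    have step : r ^ (2*j+1) ≤ (1/2)*(s2/s3)*r^(2*j+2) + (1/2)*(s3/s2)*r^(2*j) := by
      have hnn : 0 ≤ (s2 * r^(j+1) - s3 * r^j)^2 / (2*s2*s3) := by positivity
      have heq : (1/2)*(s2/s3)*r^(2*j+2) + (1/2)*(s3/s2)*r^(2*j) - r^(2*j+1)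
          = (s2 * r^(j+1) - s3 * r^j)^2 / (2*s2*s3) := by
        field_simp
        ring
      linarith [heq ▸ hnn]
    have hdiv : (1/2) * (Real.sin ((j+3 : ℕ) * θ) / s3)
        = Real.cos θ - (1/2) * (s2/s3) := by
      rw [hs4]
      field_simp
    have hc3 : ((j+1) + 2 : ℕ) = (j + 3 : ℕ) := by omega
    rw [show j + 1 + 1 = j + 2 by omega] at *
    rw [hc3, hdiv]
    rw [Finset.sum_range_succ (f := fun i => r ^ (2*i)) (n := j+1),
        Finset.sum_range_succ (f := fun i => r ^ (2*i)) (n := j)]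
    rw [Finset.sum_range_succ (f := fun i => r ^ (2*i)) (n := j)] at ih'
    have hpows : r * r ^ (2*j) = r ^ (2*j+1) := by ring
    have hpow2 : r ^ (2*(j+1)) = r ^ (2*j+2) := by ring
    rw [hpow2, mul_add, hpows]
    linarith [ih', step]

/-- Key lemma: `r·∑_{i<m-1} r^{2i} ≤ cos(π/(m+1))·∑_{i<m} r^{2i}`. -/
private lemma keylem (m : ℕ) (r : ℝ) (hr : 0 ≤ r) (hm : 1 ≤ m) :
    r * ∑ i ∈ range (m-1), r ^ (2*i)
      ≤ Real.cos (Real.pi/(m+1)) * ∑ i ∈ range m, r ^ (2*i) := by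
  obtain ⟨j, rfl⟩ : ∃ j, m = j + 1 := ⟨m - 1, by omega⟩
  have h := aux_ind (j+1) r hr j le_rfl
  have hz : Real.sin ((j+2 : ℕ) * (Real.pi/((j+1:ℕ)+1))) = 0 := by
    have : ((j+2 : ℕ) : ℝ) * (Real.pi/((j+1:ℕ)+1)) = Real.pi := by
      push_cast
      field_simp
      ring
    rw [this, Real.sin_pi]
  rw [hz] at h
  simpa using h

set_option maxHeartbeats 1000000 in
private lemma endgame (r gg A S u T : ℝ) (hS0 : 0 ≤ S) (hu0 : 0 ≤ u) (hT0 : 0 ≤ T)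
    (hP1 : 1 ≤ u^2 + T^2)
    (hmain : r * (u^2 + T^2) ≤ gg * u^2 + (1 + Real.sqrt S) * (u * T) + A * T^2) :
    r ≤ (1/2)*(A + gg) + (1/2)*Real.sqrt ((A - gg)^2 + 2*(1+S)) := by
  have hw : 1 + Real.sqrt S ≤ Real.sqrt (2*(1+S)) := by
    have hsq : (1 + Real.sqrt S)^2 ≤ 2*(1+S) := by
      nlinarith [Real.sq_sqrt hS0, sq_nonneg (1 - Real.sqrt S), Real.sqrt_nonneg S]
    calc 1 + Real.sqrt S = Real.sqrt ((1 + Real.sqrt S)^2) :=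
          (Real.sqrt_sq (by positivity)).symm
      _ ≤ Real.sqrt (2*(1+S)) := Real.sqrt_le_sqrt hsq
  set w := Real.sqrt (2*(1+S)) with hwdef
  have hw0 : (0:ℝ) ≤ w := Real.sqrt_nonneg _
  have hw2 : w^2 = 2*(1+S) := Real.sq_sqrt (by positivity)
  have huT : 0 ≤ u * T := mul_nonneg hu0 hT0
  have hmain2 : r * (u^2 + T^2) ≤ gg * u^2 + w * (u*T) + A * T^2 := by
    have := mul_le_mul_of_nonneg_right hw huT
    linarith
  set D := Real.sqrt ((A - gg)^2 + 2*(1+S)) with hDdef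
  have hD0 : 0 ≤ D := Real.sqrt_nonneg _
  have hD2 : D^2 = (A-gg)^2 + 2*(1+S) := Real.sq_sqrt (by positivity)
  have hDabs : |A - gg| ≤ D := by
    rw [hDdef, ← Real.sqrt_sq_eq_abs]
    exact Real.sqrt_le_sqrt (by nlinarith)
  set L := (1/2) * (A + gg) + (1/2) * D with hLdef
  have habs1 : A - gg ≤ D := le_trans (le_abs_self _) hDabs
  have habs2 : gg - A ≤ D := by
    have h := neg_abs_le (A - gg)
    linarith
  have hLg : 0 ≤ L - gg := by rw [hLdef]; linarith
  have hLA : 0 ≤ L - A := by rw [hLdef]; linarith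
  have hprod : (L - gg) * (L - A) = (1+S)/2 := by
    have hexp : (L - gg) * (L - A) = (1/4) * D^2 - (1/4)*(A-gg)^2 := by rw [hLdef]; ring
    rw [hexp, hD2]; ring
  have hLApos : 0 < L - A := by
    rcases lt_or_eq_of_le hLA with h | h
    · exact h
    · exfalso
      rw [← h, mul_zero] at hprod
      linarith
  have hquad : gg * u^2 + w * (u*T) + A * T^2 ≤ L * (u^2 + T^2) := by
    have hw2' : w^2 = 4 * ((L - gg) * (L - A)) := by rw [hw2, hprod]; ring
    have heq : 4*(L-A)*((L-gg)*u^2 - w*(u*T) + (L-A)*T^2)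
        = (w*u - 2*(L-A)*T)^2 + (4*((L-gg)*(L-A)) - w^2)*u^2 := by ring
    rw [← hw2', sub_self, zero_mul, add_zero] at heq
    have h2 : 0 ≤ 4*(L-A)*((L-gg)*u^2 - w*(u*T) + (L-A)*T^2) := by
      rw [heq]; exact sq_nonneg _
    have h3 : 0 ≤ (L-gg)*u^2 - w*(u*T) + (L-A)*T^2 := by
      nlinarith [h2, hLApos]
    linarith [h3]
  have hfinal : r * (u^2 + T^2) ≤ L * (u^2 + T^2) := le_trans hmain2 hquad
  nlinarith [hfinal, hP1]

set_option maxHeartbeats 1000000 in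
theorem stmt17 (n : ℕ) (hn : 2 ≤ n) (a : ℕ → ℂ) (lam : ℂ)
    (hroot : lam ^ n + ∑ i ∈ Finset.range n, a i * lam ^ i = 0) :
    ‖lam‖ ≤
      (1 / 2) * (‖a (n - 1)‖ + Real.cos (Real.pi / n)) +
        (1 / 2) * Real.sqrt ((‖a (n - 1)‖ - Real.cos (Real.pi / n)) ^ 2 +
          2 * (1 + ∑ i ∈ Finset.range (n - 1), ‖a i‖ ^ 2)) := by
  obtain ⟨j, rfl⟩ : ∃ j, n = j + 2 := ⟨n - 2, by omega⟩
  rw [show j + 2 - 1 = j + 1 from rfl]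
  set m := j + 1 with hmdef
  set r := ‖lam‖ with hrdef
  have hr : 0 ≤ r := norm_nonneg lam
  set g := Real.cos (Real.pi / (j+2 : ℕ)) with hgdef
  set A := ‖a m‖ with hAdef
  set S := ∑ i ∈ Finset.range m, ‖a i‖ ^ 2 with hSdef
  set Y := ∑ i ∈ Finset.range m, r ^ (2*i) with hYdef
  set T := r ^ m with hTdef
  set u := Real.sqrt Y with hudef
  have hS0 : 0 ≤ S := Finset.sum_nonneg fun i _ => sq_nonneg _
  have hY0 : 0 ≤ Y := Finset.sum_nonneg fun i _ => pow_nonneg hr _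
  have hY1 : 1 ≤ Y := by
    have h := Finset.single_le_sum (f := fun i => r ^ (2*i))
      (fun i _ => pow_nonneg hr _) (Finset.mem_range.mpr (show 0 < m by omega))
    simpa using h
  have hu0 : 0 ≤ u := Real.sqrt_nonneg Y
  have hu2 : u ^ 2 = Y := Real.sq_sqrt hY0
  have hT0 : 0 ≤ T := pow_nonneg hr m
  -- step 1: r^n ≤ sum of |a i| r^i
  have hpow : r ^ (j+2) ≤ ∑ i ∈ Finset.range (j+2), ‖a i‖ * r ^ i := by
    have h1 : lam ^ (j+2) = -∑ i ∈ Finset.range (j+2), a i * lam ^ i := by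
      linear_combination hroot
    calc r ^ (j+2) = ‖lam ^ (j+2)‖ := by rw [norm_pow]
      _ = ‖∑ i ∈ Finset.range (j+2), a i * lam ^ i‖ := by
          rw [h1]; exact norm_neg _
      _ ≤ ∑ i ∈ Finset.range (j+2), ‖a i * lam ^ i‖ := norm_sum_le _ _
      _ = ∑ i ∈ Finset.range (j+2), ‖a i‖ * r ^ i := by
          refine Finset.sum_congr rfl fun i _ => ?_
          rw [norm_mul, norm_pow]
  set B := ∑ i ∈ Finset.range m, ‖a i‖ * r ^ i with hBdef
  have hB0 : 0 ≤ B := Finset.sum_nonneg fun i _ =>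
    mul_nonneg (norm_nonneg _) (pow_nonneg hr _)
  have h2 : r ^ (j+2) ≤ A * T + B := by
    have hs := Finset.sum_range_succ (fun i => ‖a i‖ * r ^ i) m
    rw [show m + 1 = j + 2 by omega] at hs
    rw [hs] at hpow
    rw [hTdef, hAdef]
    linarith
  -- Cauchy-Schwarz : B ≤ √S * u
  have hB : B ≤ Real.sqrt S * u := by
    have hcs := Real.sum_mul_le_sqrt_mul_sqrt (Finset.range m)
      (fun i => ‖a i‖) (fun i => r ^ i)
    have he2 : ∑ i ∈ Finset.range m, (r ^ i) ^ 2 = Y := by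
      refine Finset.sum_congr rfl fun i _ => ?_
      rw [← pow_mul, mul_comm i 2]
    rw [he2] at hcs
    exact hcs
  -- r·Y ≤ g·Y + u·T
  have hrm2 : r ^ j ≤ u := by
    have h1 : (r ^ j) ^ 2 ≤ Y := by
      have hss := Finset.single_le_sum (f := fun i => r ^ (2*i))
        (fun i _ => pow_nonneg hr _) (Finset.mem_range.mpr (show j < m by omega))
      calc (r ^ j) ^ 2 = r ^ (2*j) := by rw [← pow_mul, mul_comm j 2]
        _ ≤ Y := hss
    calc r ^ j = Real.sqrt ((r ^ j)^2) := (Real.sqrt_sq (pow_nonneg hr j)).symm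
      _ ≤ u := Real.sqrt_le_sqrt h1
  have hrY : r * Y ≤ g * Y + u * T := by
    have hkey := keylem m r hr (by omega)
    have hcast : Real.pi / ((m:ℝ) + 1) = Real.pi / ((j+2 : ℕ) : ℝ) := by
      rw [hmdef]; push_cast; ring_nf
    rw [hcast, ← hgdef, show m - 1 = j from rfl] at hkey
    have hsplit : Y = (∑ i ∈ Finset.range j, r ^ (2*i)) + r ^ (2*j) := by
      rw [hYdef, hmdef, Finset.sum_range_succ]
    have hlast : r * r ^ (2*j) ≤ u * T := by
      calc r * r ^ (2*j) = r ^ j * r ^ (j+1) := by ring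
        _ ≤ u * r ^ (j+1) := mul_le_mul_of_nonneg_right hrm2 (pow_nonneg hr _)
        _ = u * T := by rw [hTdef]
    calc r * Y = r * (∑ i ∈ Finset.range j, r ^ (2*i)) + r * r ^ (2*j) := by
          rw [hsplit]; ring
      _ ≤ g * Y + u * T := by linarith [hkey, hlast]
  -- main inequality
  have hrT2 : r * T ^ 2 ≤ A * T ^ 2 + Real.sqrt S * u * T := by
    have hmul := mul_le_mul_of_nonneg_right h2 hT0
    have hl : r ^ (j+2) * T = r * T ^ 2 := by rw [hTdef, hmdef]; ring
    rw [hl] at hmul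
    have hBT : B * T ≤ Real.sqrt S * u * T := mul_le_mul_of_nonneg_right hB hT0
    linarith
  have hmain : r * (Y + T^2) ≤ g * Y + (1 + Real.sqrt S) * (u * T) + A * T^2 := by
    nlinarith [hrY, hrT2]
  have hP1 : (1:ℝ) ≤ u^2 + T^2 := by nlinarith [hu2, hY1, sq_nonneg T]
  have hmain' : r * (u^2 + T^2) ≤ g * u^2 + (1 + Real.sqrt S) * (u * T) + A * T^2 := by
    rw [hu2]; linarith [hmain]
  exact endgame r g A S u T hS0 hu0 hT0 hP1 hmain'
end
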